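/- arXiv:1806.03539 — 10 statements merged into one kernel-verified Lean document; each statement's English description precedes it below -/
import Mathlib

section
/- The composition of two deterministic reversible gadgets is deterministic and reversible: if the state space of each gadget is a graph of maximum degree for which each state-location pair has at most one matched partner (an undirected partial matching), and composing the gadgets identifies some locations pairwise (each internal location of one gadget connected to exactly one internal location of the other), then each external state-location pair of the composed system reaches at most one other external state-location pair by a maximal internal walk, and the resulting external transition relation is again an undirected partial matching. -/
namespace CompAuxProof

variable {V : Type*}

open Classical in
noncomputable def pf (R : V → V → Prop) (x : V) : Option V :=
  if h : ∃ y, R x y then some h.choose else none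

lemma pf_some_imp {R : V → V → Prop} {x y : V} (h : pf R x = some y) : R x y := by
  classical
  unfold pf at h
  by_cases hh : ∃ z, R x z
  · rw [dif_pos hh, Option.some.injEq] at h
    exact h ▸ hh.choose_spec
  · rw [dif_neg hh] at h; cases h

lemma pf_eq_some {R : V → V → Prop} (hu : ∀ x y z, R x y → R x z → y = z)
    {x y : V} : pf R x = some y ↔ R x y := by
  classical
  unfold pf
  by_cases h : ∃ z, R x z
  · rw [dif_pos h]
    simp only [Option.some.injEq]
    exact ⟨fun e => e ▸ h.choose_spec, fun hr => hu x _ _ h.choose_spec hr⟩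
  · rw [dif_neg h]
    constructor
    · intro e; cases e
    · intro hr; exact absurd ⟨y, hr⟩ h

lemma pf_eq_none {R : V → V → Prop} {x : V} (h : ∀ y, ¬ R x y) : pf R x = none := by
  classical
  unfold pf
  rw [dif_neg]
  rintro ⟨y, hy⟩
  exact h y hy

noncomputable def seq (M C : V → V → Prop) (u : V) : ℕ → Option V
  | 0 => some u
  | n+1 => (seq M C u n).bind (pf (if n % 2 = 0 then M else C))

lemma seq_succ (M C : V → V → Prop) (u : V) (n : ℕ) :
    seq M C u (n+1) = (seq M C u n).bind (pf (if n % 2 = 0 then M else C)) := rfl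

lemma seq_none_mono {M C : V → V → Prop} {u : V} {n : ℕ} (h : seq M C u n = none) :
    ∀ m, n ≤ m → seq M C u m = none := by
  intro m hm
  induction m with
  | zero => exact (Nat.le_zero.mp hm) ▸ h
  | succ k ih =>
    by_cases hk : n = k + 1
    · exact hk ▸ h
    · have : n ≤ k := by omega
      rw [seq_succ, ih this]
      rfl

lemma reach_seq {M C : V → V → Prop}
    (hMs : Symmetric M) (hMu : ∀ x y z, M x y → M x z → y = z)
    (hCs : Symmetric C) (hCu : ∀ x y z, C x y → C x z → y = z)
    {u : V} (hu : ∀ y, ¬ C u y)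
    {v : V} (h : Relation.ReflTransGen (fun a b => M a b ∨ C a b) u v) :
    ∃ n, seq M C u n = some v := by
  induction h with
  | refl => exact ⟨0, rfl⟩
  | @tail x y hux hxy ih =>
    obtain ⟨n, hn⟩ := ih
    rcases hxy with hM | hC
    · by_cases hp : n % 2 = 0
      · refine ⟨n+1, ?_⟩
        rw [seq_succ, hn, if_pos hp]
        simpa [pf_eq_some hMu] using hM
      · obtain ⟨m, rfl⟩ : ∃ m, n = m + 1 := ⟨n-1, by omega⟩
        have hm : m % 2 = 0 := by omega
        rw [seq_succ, if_pos hm, Option.bind_eq_some_iff] at hn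
        obtain ⟨p, hpm, hpx⟩ := hn
        rw [pf_eq_some hMu] at hpx
        have : y = p := hMu x y p hM (hMs hpx)
        exact ⟨m, this ▸ hpm⟩
    · by_cases hp : n % 2 = 0
      · rcases n with _ | m
        · have : x = u := by simpa [seq] using hn.symm
          exact absurd (this ▸ hC) (hu y)
        · have hm : ¬ m % 2 = 0 := by omega
          rw [seq_succ, if_neg hm, Option.bind_eq_some_iff] at hn
          obtain ⟨p, hpm, hpx⟩ := hn
          rw [pf_eq_some hCu] at hpx
          have : y = p := hCu x y p hC (hCs hpx)
          exact ⟨m, this ▸ hpm⟩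
      · refine ⟨n+1, ?_⟩
        rw [seq_succ, hn, if_neg hp]
        simpa [pf_eq_some hCu] using hC

lemma external_odd {M C : V → V → Prop}
    (hCs : Symmetric C)
    {u v : V} (hu : ∀ y, ¬ C u y) (hv : ∀ y, ¬ C v y) (hvu : v ≠ u)
    {n : ℕ} (hn : seq M C u n = some v) : n % 2 = 1 := by
  rcases n with _ | m
  · exact absurd (by simpa [seq] using hn.symm) hvu
  · by_cases hm : m % 2 = 0
    · omega
    · rw [seq_succ, if_neg hm, Option.bind_eq_some_iff] at hn
      obtain ⟨p, hpm, hpx⟩ := hn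
      exact absurd (hCs (pf_some_imp hpx)) (hv p)

lemma seq_stop {M C : V → V → Prop} {u v : V} (hv : ∀ y, ¬ C v y)
    {n : ℕ} (hodd : n % 2 = 1) (hn : seq M C u n = some v) :
    seq M C u (n+1) = none := by
  rw [seq_succ, hn, if_neg (by omega), Option.bind_some, pf_eq_none hv]

lemma unique_external {M C : V → V → Prop}
    (hMs : Symmetric M) (hMu : ∀ x y z, M x y → M x z → y = z)
    (hCs : Symmetric C) (hCu : ∀ x y z, C x y → C x z → y = z)
    {u v w : V} (hu : ∀ y, ¬ C u y) (hv : ∀ y, ¬ C v y) (hw : ∀ y, ¬ C w y)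
    (hvu : v ≠ u) (hwu : w ≠ u)
    (h1 : Relation.ReflTransGen (fun a b => M a b ∨ C a b) u v)
    (h2 : Relation.ReflTransGen (fun a b => M a b ∨ C a b) u w) : v = w := by
  obtain ⟨n, hn⟩ := reach_seq hMs hMu hCs hCu hu h1
  obtain ⟨m, hm⟩ := reach_seq hMs hMu hCs hCu hu h2
  have hno := external_odd (M := M) hCs hu hv hvu hn
  have hmo := external_odd (M := M) hCs hu hw hwu hm
  have hns := seq_stop hv hno hn
  have hms := seq_stop hw hmo hm
  have hmn : m ≤ n := by
    by_contra hlt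
    rw [seq_none_mono hns m (by omega)] at hm
    cases hm
  have hnm : n ≤ m := by
    by_contra hlt
    rw [seq_none_mono hms n (by omega)] at hn
    cases hn
  have : n = m := le_antisymm hnm hmn
  rw [this, hm] at hn
  exact (Option.some_inj.mp hn).symm

end CompAuxProof


section
variable {V₁ V₂ : Type*}

/-- Edge relation of the composition of two gadgets (matchings `M₁`, `M₂` on disjoint
vertex sets of state-location pairs) over a set of connections `C` identifying internal
locations of the first gadget with internal locations of the second. -/
def CompEdge (M₁ : V₁ → V₁ → Prop) (M₂ : V₂ → V₂ → Prop) (C : V₁ → V₂ → Prop) :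
    V₁ ⊕ V₂ → V₁ ⊕ V₂ → Prop := fun a b =>
  match a, b with
  | .inl x, .inl y => M₁ x y
  | .inr x, .inr y => M₂ x y
  | .inl x, .inr y => C x y
  | .inr x, .inl y => C y x

/-- A vertex is external if it takes part in no connection. -/
def CompExternal (C : V₁ → V₂ → Prop) : V₁ ⊕ V₂ → Prop := fun a =>
  match a with
  | .inl x => ∀ w, ¬ C x w
  | .inr y => ∀ v, ¬ C v y

/-- The external transition relation of the composed system: an external vertex reaches
another external vertex by a walk through the composed system. -/
def CompExtTrans (M₁ : V₁ → V₁ → Prop) (M₂ : V₂ → V₂ → Prop) (C : V₁ → V₂ → Prop) :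
    V₁ ⊕ V₂ → V₁ ⊕ V₂ → Prop := fun u v =>
  CompExternal C u ∧ CompExternal C v ∧ u ≠ v ∧
    Relation.ReflTransGen (CompEdge M₁ M₂ C) u v

open CompAuxProof

/-- Internal-matching part of the composed edge relation. -/
def CompMsum (M₁ : V₁ → V₁ → Prop) (M₂ : V₂ → V₂ → Prop) : V₁ ⊕ V₂ → V₁ ⊕ V₂ → Prop := fun a b =>
  match a, b with
  | .inl x, .inl y => M₁ x y
  | .inr x, .inr y => M₂ x y
  | _, _ => False

/-- Connection part of the composed edge relation. -/
def CompCcross (C : V₁ → V₂ → Prop) : V₁ ⊕ V₂ → V₁ ⊕ V₂ → Prop := fun a b =>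
  match a, b with
  | .inl x, .inr y => C x y
  | .inr x, .inl y => C y x
  | _, _ => False

variable (M₁ : V₁ → V₁ → Prop) (M₂ : V₂ → V₂ → Prop) (C : V₁ → V₂ → Prop)

lemma compEdge_eq : CompEdge M₁ M₂ C =
    fun a b => CompMsum M₁ M₂ a b ∨ CompCcross C a b := by
  funext a b
  rcases a with x | x <;> rcases b with y | y <;>
    simp [CompEdge, CompMsum, CompCcross]

lemma compMsum_symm (h₁ : Symmetric M₁) (h₂ : Symmetric M₂) :
    Symmetric (CompMsum M₁ M₂) := by
  rintro (x | x) (y | y) h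
  · exact h₁ h
  · exact (h : False).elim
  · exact (h : False).elim
  · exact h₂ h

lemma compMsum_unique (h₁ : ∀ v w w', M₁ v w → M₁ v w' → w = w')
    (h₂ : ∀ v w w', M₂ v w → M₂ v w' → w = w') :
    ∀ x y z, CompMsum M₁ M₂ x y → CompMsum M₁ M₂ x z → y = z := by
  rintro (x | x) (y | y) (z | z) hy hz
  · exact congrArg Sum.inl (h₁ x y z hy hz)
  · exact (hz : False).elim
  · exact (hy : False).elim
  · exact (hy : False).elim
  · exact (hy : False).elim
  · exact (hy : False).elim
  · exact (hz : False).elim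
  · exact congrArg Sum.inr (h₂ x y z hy hz)

lemma compCcross_symm : Symmetric (CompCcross C) := by
  rintro (x | x) (y | y) h
  · exact (h : False).elim
  · exact h
  · exact h
  · exact (h : False).elim

lemma compCcross_unique (h₁ : ∀ v w w', C v w → C v w' → w = w')
    (h₂ : ∀ v v' w, C v w → C v' w → v = v') :
    ∀ x y z, CompCcross C x y → CompCcross C x z → y = z := by
  rintro (x | x) (y | y) (z | z) hy hz
  · exact (hy : False).elim
  · exact (hy : False).elim
  · exact (hz : False).elim
  · exact congrArg Sum.inr (h₁ x y z hy hz)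
  · exact congrArg Sum.inl (h₂ y z x hy hz)
  · exact (hz : False).elim
  · exact (hy : False).elim
  · exact (hy : False).elim

lemma compExternal_iff : ∀ a, CompExternal C a ↔ ∀ b, ¬ CompCcross C a b := by
  rintro (x | x)
  · constructor
    · rintro h (y | y) hc
      · exact (hc : False)
      · exact h y hc
    · intro h w hc
      exact h (.inr w) hc
  · constructor
    · rintro h (y | y) hc
      · exact h y hc
      · exact (hc : False)
    · intro h v hc
      exact h (.inl v) hc

/-- the composition of two deterministic reversible gadgets is
deterministic and reversible.  If each gadget's state space is an undirected partial
matching (symmetric, irreflexive, each vertex has at most one partner) and the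
connections `C` form a partial matching between internal locations, then each external
state-location pair reaches at most one other external state-location pair, and the
resulting external transition relation is again an undirected partial matching. -/

theorem composition_deterministic_reversible
    (M₁ : V₁ → V₁ → Prop) (M₂ : V₂ → V₂ → Prop) (C : V₁ → V₂ → Prop)
    (hM₁s : Symmetric M₁) (hM₁i : ∀ v, ¬ M₁ v v)
    (hM₁u : ∀ v w w', M₁ v w → M₁ v w' → w = w')
    (hM₂s : Symmetric M₂) (hM₂i : ∀ v, ¬ M₂ v v)
    (hM₂u : ∀ v w w', M₂ v w → M₂ v w' → w = w')
    (hCu₁ : ∀ v w w', C v w → C v w' → w = w')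
    (hCu₂ : ∀ v v' w, C v w → C v' w → v = v') :
    (∀ u v, CompExtTrans M₁ M₂ C u v → CompExtTrans M₁ M₂ C v u) ∧
    (∀ u v w, CompExtTrans M₁ M₂ C u v → CompExtTrans M₁ M₂ C u w → v = w) :=  by
  have hedge := compEdge_eq M₁ M₂ C
  have hMs := compMsum_symm M₁ M₂ hM₁s hM₂s
  have hMu := compMsum_unique M₁ M₂ hM₁u hM₂u
  have hCs := compCcross_symm C
  have hCu := compCcross_unique C hCu₁ hCu₂
  constructor
  · rintro u v ⟨h1, h2, h3, h4⟩
    refine ⟨h2, h1, h3.symm, ?_⟩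
    have hesym : Symmetric (CompEdge M₁ M₂ C) := by
      rw [hedge]
      intro a b h
      rcases h with h | h
      · exact Or.inl (hMs h)
      · exact Or.inr (hCs h)
    haveI : Std.Symm (CompEdge M₁ M₂ C) := ⟨fun _ _ h => hesym h⟩
    exact (Relation.ReflTransGen.symmetric (r := CompEdge M₁ M₂ C)).symm _ _ h4
  · rintro u v w ⟨h1, h2, h3, h4⟩ ⟨_, h2', h3', h4'⟩
    rw [hedge] at h4 h4'
    exact unique_external hMs hMu hCs hCu
      ((compExternal_iff C u).mp h1)
      ((compExternal_iff C v).mp h2)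
      ((compExternal_iff C w).mp h2')
      (Ne.symm h3) (Ne.symm h3') h4 h4'

end
end

section
/- In a system consisting of 1-toggles (directed edges that reverse direction when traversed) and undirected edges, if there exists a walk from s to t, then there exists a walk from s to t that traverses each toggle at most once; consequently, t is reachable from s in the toggle system if and only if t is reachable from s in the mixed graph obtained by treating each toggle as a static directed edge in its initial orientation. -/
section
variable (V T : Type*)

/-- A configuration of a 1-toggle system: current vertex together with the current
orientation of each toggle (`false` = initial orientation, `true` = reversed). -/
abbrev ToggleConfig := V × (T → Bool)

variable {V T}

/-- The directed pair currently realized by toggle `t` (with initial endpoints `e t`),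
given its orientation bit `b`. -/
def dirOf (e : T → V × V) (t : T) (b : Bool) : V × V :=
  if b then ((e t).2, (e t).1) else e t

/-- One move in a 1-toggle system: either along an undirected edge (`U`), or along a
toggle in its current direction, which flips that toggle. -/
def ToggleStep [DecidableEq T] (U : V → V → Prop) (e : T → V × V) :
    ToggleConfig V T → ToggleConfig V T → Prop := fun c c' =>
  (U c.1 c'.1 ∧ c'.2 = c.2) ∨
  (∃ t : T, c.1 = (dirOf e t (c.2 t)).1 ∧ c'.1 = (dirOf e t (c.2 t)).2 ∧
    c'.2 = Function.update c.2 t (!c.2 t))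

/-- A walk in the 1-toggle system from configuration `c₀` to configuration `c₁`:
a nonempty list of configurations, consecutive ones related by `ToggleStep`. -/
def IsToggleWalk [DecidableEq T] (U : V → V → Prop) (e : T → V × V)
    (l : List (ToggleConfig V T)) (c₀ c₁ : ToggleConfig V T) : Prop :=
  l.Chain' (ToggleStep U e) ∧ l.head? = some c₀ ∧ l.getLast? = some c₁

/-- Number of times the walk `l` traverses toggle `t` (number of consecutive pairs
whose orientation of `t` differs). -/
def travCount (l : List (ToggleConfig V T)) (t : T) : ℕ :=
  (l.zip l.tail).countP fun p => p.1.2 t != p.2.2 t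

-- aux lemmas

lemma travCount_cons_cons (a b : ToggleConfig V T) (l : List (ToggleConfig V T)) (tg : T) :
    travCount (a :: b :: l) tg =
      (if a.2 tg != b.2 tg then 1 else 0) + travCount (b :: l) tg := by
  simp [travCount, List.countP_cons]
  by_cases h : a.2 tg = b.2 tg <;> simp [h] <;> omega

lemma travCount_zero_of_true (tg : T) :
    ∀ (l : List (ToggleConfig V T)),
      l.Chain' (fun c c' => c.2 tg ≤ c'.2 tg) →
      (∀ c ∈ l.head?, c.2 tg = true) → travCount l tg = 0
  | [], _, _ => rfl
  | [a], _, _ => rfl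
  | a :: b :: l, hc, hh => by
    have hab : a.2 tg ≤ b.2 tg := (List.isChain_cons_cons.mp hc).1
    have ha : a.2 tg = true := hh a rfl
    have hb : b.2 tg = true := by
      rw [ha] at hab; exact top_le_iff.mp hab
    rw [travCount_cons_cons]
    have : (a.2 tg != b.2 tg) = false := by rw [ha, hb]; rfl
    rw [this]
    simp only [Bool.false_eq_true, if_false, Nat.zero_add]
    exact travCount_zero_of_true tg (b :: l) (List.isChain_cons_cons.mp hc).2
      (fun c hc' => by simp at hc'; exact hc' ▸ hb)

lemma travCount_le_one (tg : T) :
    ∀ (l : List (ToggleConfig V T)),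
      l.Chain' (fun c c' => c.2 tg ≤ c'.2 tg) → travCount l tg ≤ 1
  | [], _ => by simp [travCount]
  | [a], _ => by simp [travCount]
  | a :: b :: l, hc => by
    rw [travCount_cons_cons]
    by_cases h : a.2 tg = b.2 tg
    · have : (a.2 tg != b.2 tg) = false := by rw [h]; simp
      rw [this]
      simpa using travCount_le_one tg (b :: l) (List.isChain_cons_cons.mp hc).2
    · have hb : b.2 tg = true := by
        have hab : a.2 tg ≤ b.2 tg := (List.isChain_cons_cons.mp hc).1
        cases hbv : b.2 tg
        · cases hav : a.2 tg
          · exact absurd (hav.trans hbv.symm) h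
          · rw [hav, hbv] at hab; exact absurd hab (by simp)
        · rfl
      have h0 : travCount (b :: l) tg = 0 :=
        travCount_zero_of_true tg (b :: l) (List.isChain_cons_cons.mp hc).2
          (fun c hc' => by simp at hc'; exact hc' ▸ hb)
      rw [h0]
      split <;> omega

lemma exists_nodup_path {R : V → V → Prop} {s t : V} (h : Relation.ReflTransGen R s t) :
    ∃ L : List V, L.Chain' R ∧ L.head? = some s ∧ L.getLast? = some t ∧ L.Nodup := by
  induction h using Relation.ReflTransGen.head_induction_on with
  | refl => exact ⟨[t], by simp [List.Chain'], rfl, rfl, by simp⟩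
  | @head a b hab hst ih =>
    obtain ⟨L, hc, hh, hl, hn⟩ := ih
    by_cases hmem : a ∈ L
    · obtain ⟨L₁, L₂, rfl⟩ := List.mem_iff_append.mp hmem
      refine ⟨a :: L₂, hc.suffix ⟨L₁, rfl⟩, rfl, ?_, (List.nodup_append.mp hn).2.1⟩
      rw [List.getLast?_append] at hl
      have hx : (a :: L₂).getLast? = some ((a :: L₂).getLast (by simp)) :=
        List.getLast?_eq_getLast (l := a :: L₂) (by simp)
      rw [hx] at hl ⊢
      simpa [Option.or] using hl
    · refine ⟨a :: L, ?_, rfl, ?_, by simp [hn, hmem]⟩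
      · rw [List.Chain', List.isChain_cons]
        exact ⟨fun y hy => by rw [hh] at hy; exact (Option.some_inj.mp hy) ▸ hab, hc⟩
      · cases L with
        | nil => simp at hh
        | cons x xs => simpa using hl

lemma build_walk [DecidableEq T] (U : V → V → Prop) (e : T → V × V) :
    ∀ (l : List V) (v : V) (σ : T → Bool),
      List.Chain' (fun a b => U a b ∨ ∃ tg, e tg = (a, b)) (v :: l) →
      (v :: l).Nodup →
      (∀ tg, σ tg = true → (e tg).1 ∉ v :: l) →
      ∃ (lc : List (ToggleConfig V T)) (σ' : T → Bool),
        lc.Chain' (ToggleStep U e) ∧ lc.head? = some (v, σ) ∧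
        lc.getLast? = some ((v :: l).getLast (by simp), σ') ∧
        ∀ tg, lc.Chain' (fun c c' => c.2 tg ≤ c'.2 tg)
  | [], v, σ, _, _, _ => ⟨[(v, σ)], σ, by simp [List.Chain'], rfl, by simp, fun tg => by simp [List.Chain']⟩
  | w :: l, v, σ, hc, hn, hσ => by
    have hvw : U v w ∨ ∃ tg, e tg = (v, w) := (List.isChain_cons_cons.mp hc).1
    have hc' : List.Chain' (fun a b => U a b ∨ ∃ tg, e tg = (a, b)) (w :: l) :=
      (List.isChain_cons_cons.mp hc).2
    have hvn : v ∉ w :: l := (List.nodup_cons.mp hn).1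
    have hn' : (w :: l).Nodup := (List.nodup_cons.mp hn).2
    rcases hvw with hu | ⟨tg, htg⟩
    · obtain ⟨lc, σ', hcw, hhd, hlast, hmono⟩ :=
        build_walk U e l w σ hc' hn'
          (fun tg ht hm => hσ tg ht (List.mem_cons_of_mem _ hm))
      refine ⟨(v, σ) :: lc, σ', ?_, rfl, ?_, ?_⟩
      · rw [List.Chain', List.isChain_cons]
        refine ⟨fun y hy => ?_, hcw⟩
        rw [hhd] at hy
        cases hy
        exact Or.inl ⟨hu, rfl⟩
      · cases lc with
        | nil => simp at hhd
        | cons c cs =>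
          rw [List.getLast?_cons_cons, hlast,
            List.getLast_cons (by simp : w :: l ≠ [])]
      · intro tg
        rw [List.Chain', List.isChain_cons]
        refine ⟨fun y hy => ?_, hmono tg⟩
        rw [hhd] at hy
        cases hy
        exact le_refl _
    · have hσtg : σ tg = false := by
        cases hb : σ tg
        · rfl
        · exact absurd (htg ▸ List.mem_cons_self (a := v) (l := w :: l) : (e tg).1 ∈ v :: w :: l)
            (hσ tg hb)
      set σ₂ := Function.update σ tg true with hσ₂
      have hinv : ∀ tg', σ₂ tg' = true → (e tg').1 ∉ w :: l := by
        intro tg' ht'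
        by_cases htg' : tg' = tg
        · subst htg'
          rw [htg]
          exact hvn
        · rw [hσ₂, Function.update_of_ne htg'] at ht'
          exact fun hm => hσ tg' ht' (List.mem_cons_of_mem _ hm)
      obtain ⟨lc, σ', hcw, hhd, hlast, hmono⟩ := build_walk U e l w σ₂ hc' hn' hinv
      have hstep : ToggleStep U e (v, σ) (w, σ₂) := by
        refine Or.inr ⟨tg, ?_, ?_, ?_⟩
        · simp [dirOf, hσtg, htg]
        · simp [dirOf, hσtg, htg]
        · simp only [hσtg]
          rfl
      refine ⟨(v, σ) :: lc, σ', ?_, rfl, ?_, ?_⟩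
      · rw [List.Chain', List.isChain_cons]
        refine ⟨fun y hy => ?_, hcw⟩
        rw [hhd] at hy
        cases hy
        exact hstep
      · cases lc with
        | nil => simp at hhd
        | cons c cs =>
          rw [List.getLast?_cons_cons, hlast,
            List.getLast_cons (by simp : w :: l ≠ [])]
      · intro tg'
        rw [List.Chain', List.isChain_cons]
        refine ⟨fun y hy => ?_, hmono tg'⟩
        rw [hhd] at hy
        cases hy
        show σ tg' ≤ σ₂ tg'
        by_cases h : tg' = tg
        · subst h
          rw [hσ₂, Function.update_self, hσtg]
          exact Bool.false_le _
        · rw [hσ₂, Function.update_of_ne h]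

lemma chain_last {α : Type*} {r : α → α → Prop} {P : α → Prop}
    (hP : ∀ a b, r a b → P a → P b) :
    ∀ (l : List α) (c₀ c₁ : α), l.Chain' r → l.head? = some c₀ →
      l.getLast? = some c₁ → P c₀ → P c₁
  | [], _, _ => by simp
  | [a], c₀, c₁ => fun _ h0 h1 hp => by
      simp at h0 h1
      rw [← h1, h0]
      exact hp
  | a :: b :: l, c₀, c₁ => fun hc h0 h1 hp => by
      simp only [List.head?_cons, Option.some_inj] at h0
      exact chain_last hP (b :: l) b c₁ (List.isChain_cons_cons.mp hc).2 rfl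
        (by rwa [List.getLast?_cons_cons] at h1)
        (hP a b (List.isChain_cons_cons.mp hc).1 (h0 ▸ hp))

lemma step_inv [DecidableEq T] (U : V → V → Prop) (e : T → V × V) (s : V)
    (c c' : ToggleConfig V T) (h : ToggleStep U e c c')
    (hp : Relation.ReflTransGen (fun a b => U a b ∨ ∃ tg, e tg = (a, b)) s c.1 ∧
      ∀ tg, c.2 tg = true →
        Relation.ReflTransGen (fun a b => U a b ∨ ∃ tg, e tg = (a, b)) s (e tg).1) :
    Relation.ReflTransGen (fun a b => U a b ∨ ∃ tg, e tg = (a, b)) s c'.1 ∧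
      ∀ tg, c'.2 tg = true →
        Relation.ReflTransGen (fun a b => U a b ∨ ∃ tg, e tg = (a, b)) s (e tg).1 := by
  obtain ⟨h1, h2⟩ := hp
  rcases h with ⟨hu, hσ⟩ | ⟨tg, hA, hB, hC⟩
  · exact ⟨h1.tail (Or.inl hu), fun tg ht => h2 tg (by rw [← hσ]; exact ht)⟩
  · cases hb : c.2 tg
    · rw [hb] at hA hB
      simp only [dirOf, if_false, Bool.false_eq_true] at hA hB
      constructor
      · exact h1.tail (Or.inr ⟨tg, Prod.ext hA.symm hB.symm⟩)
      · intro tg' ht'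
        by_cases htg' : tg' = tg
        · subst htg'
          rw [← hA]
          exact h1
        · rw [hC, Function.update_of_ne htg'] at ht'
          exact h2 tg' ht'
    · rw [hb] at hA hB
      simp only [dirOf, if_true] at hA hB
      constructor
      · rw [hB]
        exact h2 tg hb
      · intro tg' ht'
        by_cases htg' : tg' = tg
        · subst htg'
          rw [hC, Function.update_self, hb] at ht'
          simp at ht'
        · rw [hC, Function.update_of_ne htg'] at ht'
          exact h2 tg' ht'


/-- if there is a walk from `s` to `t` in a 1-toggle system (starting with
all toggles in their initial orientation), then there is such a walk traversing each
toggle at most once; consequently `t` is reachable from `s` in the toggle system iff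
`t` is reachable from `s` in the mixed graph obtained by treating each toggle as a
static directed edge in its initial orientation. -/
theorem toggle_system_mixed_graph [DecidableEq T] (U : V → V → Prop) (hU : Symmetric U)
    (e : T → V × V) (s t : V) :
    (∀ (l : List (ToggleConfig V T)) (σ : T → Bool),
      IsToggleWalk U e l (s, fun _ => false) (t, σ) →
      ∃ (l' : List (ToggleConfig V T)) (σ' : T → Bool),
        IsToggleWalk U e l' (s, fun _ => false) (t, σ') ∧ ∀ tg, travCount l' tg ≤ 1) ∧
    ((∃ (l : List (ToggleConfig V T)) (σ : T → Bool),
        IsToggleWalk U e l (s, fun _ => false) (t, σ)) ↔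
      Relation.ReflTransGen (fun a b => U a b ∨ ∃ tg, e tg = (a, b)) s t) := by
  set R : V → V → Prop := fun a b => U a b ∨ ∃ tg, e tg = (a, b) with hR
  have fwd : (∃ (l : List (ToggleConfig V T)) (σ : T → Bool),
      IsToggleWalk U e l (s, fun _ => false) (t, σ)) →
      Relation.ReflTransGen R s t := by
    rintro ⟨l, σ, hch, hhd, hlast⟩
    have := chain_last (P := fun c : ToggleConfig V T =>
        Relation.ReflTransGen R s c.1 ∧
          ∀ tg, c.2 tg = true → Relation.ReflTransGen R s (e tg).1)
      (fun a b hab hp => step_inv U e s a b hab hp) l _ _ hch hhd hlast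
      ⟨Relation.ReflTransGen.refl, fun tg ht => by simp at ht⟩
    exact this.1
  have bwd : Relation.ReflTransGen R s t →
      ∃ (l' : List (ToggleConfig V T)) (σ' : T → Bool),
        IsToggleWalk U e l' (s, fun _ => false) (t, σ') ∧ ∀ tg, travCount l' tg ≤ 1 := by
    intro h
    obtain ⟨L, hc, hhd, hlast, hnd⟩ := exists_nodup_path h
    cases L with
    | nil => simp at hhd
    | cons v l =>
      simp only [List.head?_cons, Option.some_inj] at hhd
      subst hhd
      obtain ⟨lc, σ', hcw, hhd', hlast', hmono⟩ :=
        build_walk U e l v (fun _ => false) hc hnd (fun tg ht => by simp at ht)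
      have hT : (v :: l).getLast (by simp) = t := by
        rw [List.getLast?_eq_getLast (l := v :: l) (by simp)] at hlast
        exact Option.some_inj.mp hlast
      rw [hT] at hlast'
      exact ⟨lc, σ', ⟨hcw, hhd', hlast'⟩, fun tg => travCount_le_one tg lc (hmono tg)⟩
  refine ⟨fun l σ hw => bwd (fwd ⟨l, σ, hw⟩), fwd, fun h => ?_⟩
  obtain ⟨l', σ', hw, _⟩ := bwd h
  exact ⟨l', σ', hw⟩


end
end

section
/- Given a walk in a 1-toggle system that traverses some toggle more than once, there exists a strictly shorter walk between the same start and end vertices achieving the same final vertex. Hence a shortest walk between two vertices traverses every toggle at most once. -/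
section
variable (V T : Type*)

variable {V T}

private lemma exists_one_idx {α : Type*} (p : α → Bool) (d : α) :
    ∀ (L : List α), 1 ≤ L.countP p → ∃ k, k < L.length ∧ p (L.getD k d) := by
  intro L
  induction L with
  | nil => intro h; simp at h
  | cons a L ih =>
    intro h
    by_cases hp : p a = true
    · exact ⟨0, by simp, by simpa using hp⟩
    · rw [List.countP_cons, if_neg hp] at h
      obtain ⟨k, hk, hpk⟩ := ih (by omega)
      exact ⟨k + 1, by simpa using hk, by simpa using hpk⟩

private lemma exists_two_idx {α : Type*} (p : α → Bool) (d : α) :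
    ∀ (L : List α), 2 ≤ L.countP p →
      ∃ k1 k2, k1 < k2 ∧ k2 < L.length ∧ p (L.getD k1 d) ∧ p (L.getD k2 d) := by
  intro L
  induction L with
  | nil => intro h; simp at h
  | cons a L ih =>
    intro h
    rw [List.countP_cons] at h
    by_cases hp : p a = true
    · rw [if_pos hp] at h
      obtain ⟨k, hk, hpk⟩ := exists_one_idx p d L (by omega)
      exact ⟨0, k + 1, by omega, by simpa using hk, by simpa using hp, by simpa using hpk⟩
    · rw [if_neg hp] at h
      obtain ⟨k1, k2, h12, hk2, h1, h2⟩ := ih (by omega)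
      exact ⟨k1 + 1, k2 + 1, by omega, by simpa using hk2, by simpa using h1,
        by simpa using h2⟩

/-- Flip the bits of all toggles on which `π` and `ρ` disagree. -/
private def gfun (π ρ : T → Bool) : (T → Bool) → (T → Bool) :=
  fun b u => if π u = ρ u then b u else !(b u)

private lemma gfun_eq (π ρ b : T → Bool) (u : T) (h : π u = ρ u) :
    gfun π ρ b u = b u := if_pos h

private lemma gfun_rho (π ρ : T → Bool) : gfun π ρ ρ = π := by
  funext u
  unfold gfun
  split_ifs with h
  · exact h.symm
  · cases hπ : π u <;> cases hρ : ρ u <;> simp_all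

/-- Apply `gfun` to the toggle-state part of a configuration. -/
private def Gfun (π ρ : T → Bool) : ToggleConfig V T → ToggleConfig V T :=
  fun c => (c.1, gfun π ρ c.2)

private lemma shorter_walk [DecidableEq T] (U : V → V → Prop) (e : T → V × V)
    (c₀ : ToggleConfig V T) (tv : V) (σ : T → Bool) (tg : T)
    (l : List (ToggleConfig V T)) (hw : IsToggleWalk U e l c₀ (tv, σ))
    (h2 : 2 ≤ travCount l tg) :
    ∃ (l' : List (ToggleConfig V T)) (σ' : T → Bool),
      IsToggleWalk U e l' c₀ (tv, σ') ∧ l'.length < l.length := by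
  classical
  obtain ⟨hchain, hhead, hlast⟩ := hw
  set n := l.length with hn
  set f : ℕ → ToggleConfig V T := fun k => l.getD k c₀ with hfdef
  have hne : l ≠ [] := by rintro rfl; simp at hhead
  have hnpos : 0 < n := List.length_pos_iff.mpr hne
  have hfget : ∀ (k : ℕ) (h : k < n), f k = l[k] := fun k h => List.getD_eq_getElem l c₀ h
  have hstep : ∀ k, k + 1 < n → ToggleStep U e (f k) (f (k + 1)) := by
    intro k hk
    have := List.isChain_iff_getElem.mp hchain k (by omega)
    simpa [List.get_eq_getElem, hfget k (by omega), hfget (k+1) hk] using this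
  have hf0 : f 0 = c₀ := by
    rw [hfget 0 hnpos, List.getElem_zero hnpos]
    rw [List.head?_eq_head hne] at hhead
    exact Option.some_injective _ hhead
  have hflast : f (n - 1) = (tv, σ) := by
    rw [List.getLast?_eq_getElem?, List.getElem?_eq_getElem (by omega : n - 1 < n)] at hlast
    rw [hfget (n-1) (by omega)]
    exact Option.some_injective _ hlast
  -- extract two crossings of tg
  have hzlen : (l.zip l.tail).length = n - 1 := by
    rw [List.length_zip, List.length_tail]; omega
  have hz : ∀ (k : ℕ), k < n - 1 →
      (l.zip l.tail).getD k (c₀, c₀) = (f k, f (k + 1)) := by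
    intro k hk
    have hk' : k < (l.zip l.tail).length := by omega
    rw [List.getD_eq_getElem _ _ hk', List.getElem_zip, List.getElem_tail,
      hfget k (by omega), hfget (k+1) (by omega)]
  rw [travCount] at h2
  obtain ⟨k1, k2, h12, hk2len, hp1, hp2⟩ :=
    exists_two_idx (fun p => p.1.2 tg != p.2.2 tg) (c₀, c₀) (l.zip l.tail) h2
  rw [hzlen] at hk2len
  rw [hz k1 (by omega)] at hp1
  rw [hz k2 (by omega)] at hp2
  have hc1 : (f k1).2 tg ≠ (f (k1+1)).2 tg := by simpa using hp1
  have hc2 : (f k2).2 tg ≠ (f (k2+1)).2 tg := by simpa using hp2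
  -- the last repeated crossing
  set Rep : ℕ → Prop := fun k => ∃ u : T, (k + 1 < n ∧ (f k).2 u ≠ (f (k+1)).2 u) ∧
    ∃ k', k' < k ∧ k' + 1 < n ∧ (f k').2 u ≠ (f (k'+1)).2 u with hRep
  have hRepk2 : Rep k2 := ⟨tg, ⟨by omega, hc2⟩, k1, h12, by omega, hc1⟩
  set j := Nat.findGreatest Rep n with hjdef
  have hjRep : Rep j := Nat.findGreatest_spec (show k2 ≤ n by omega) hRepk2
  have hjmax : ∀ k, j < k → ¬ Rep k := by
    intro k hk hRk
    by_cases hkn : k ≤ n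
    · exact Nat.findGreatest_is_greatest hk hkn hRk
    · obtain ⟨u, ⟨h1, -⟩, -⟩ := hRk; omega
  obtain ⟨t, ⟨hjn, hjc⟩, i0, hi0j, hi0n, hi0c⟩ := hjRep
  -- the previous crossing of t
  set Q : ℕ → Prop := fun k => k < j ∧ ((f k).2 t ≠ (f (k+1)).2 t) with hQ
  set i := Nat.findGreatest Q j with hidef
  have hQi : Q i := Nat.findGreatest_spec (le_of_lt hi0j) ⟨hi0j, hi0c⟩
  obtain ⟨hij, hic⟩ := hQi
  have hin : i + 1 < n := by omega
  have himax : ∀ k, i < k → k < j → ¬ ((f k).2 t ≠ (f (k+1)).2 t) := by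
    intro k h1 h2 hc
    exact Nat.findGreatest_is_greatest h1 (le_of_lt h2) ⟨h2, hc⟩
  -- constancy lemmas
  have const : ∀ (u : T) (a b : ℕ), a ≤ b → b < n →
      (∀ k, a ≤ k → k < b → (f k).2 u = (f (k+1)).2 u) → (f a).2 u = (f b).2 u := by
    intro u a b hab
    induction b, hab using Nat.le_induction with
    | base => intro _ _; rfl
    | succ b hb ih =>
      intro hbn hk
      rw [ih (by omega) (fun k hk1 hk2 => hk k hk1 (by omega)), hk b hb (by omega)]
  have exCross : ∀ (u : T) (a b : ℕ), a ≤ b → b < n → (f a).2 u ≠ (f b).2 u →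
      ∃ k, a ≤ k ∧ k < b ∧ (f k).2 u ≠ (f (k+1)).2 u := by
    intro u a b hab hbn hne'
    by_contra hcon
    push_neg at hcon
    exact hne' (const u a b hab hbn fun k hk1 hk2 => hcon k hk1 hk2)
  -- a step whose u-bit changes is a u-toggle step
  have ttog : ∀ (u : T) (k : ℕ), k + 1 < n → (f k).2 u ≠ (f (k+1)).2 u →
      (f k).1 = (dirOf e u ((f k).2 u)).1 ∧ (f (k+1)).1 = (dirOf e u ((f k).2 u)).2 ∧
      (f (k+1)).2 = Function.update (f k).2 u (!(f k).2 u) := by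
    intro u k hk hcu
    have hs := hstep k hk
    simp only [ToggleStep] at hs
    rcases hs with ⟨-, hb⟩ | ⟨s, h1, h2, h3⟩
    · exact absurd (congrFun hb u).symm hcu
    · have hsu : s = u := by
        by_contra hsu
        apply hcu
        rw [h3, Function.update_of_ne (fun h => hsu h.symm)]
      subst hsu
      exact ⟨h1, h2, h3⟩
  -- orientation of t at step j is reversed
  have hbitj : (f j).2 t = !((f i).2 t) := by
    have h1 : (f (i+1)).2 t = !((f i).2 t) := by
      rw [(ttog t i hin hic).2.2, Function.update_self]
    have h2 : (f (i+1)).2 t = (f j).2 t := by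
      refine const t (i+1) j (by omega) (by omega) (fun k hk1 hk2 => ?_)
      by_contra hcc
      exact himax k (by omega) hk2 hcc
    rw [← h2, h1]
  have hdir : ∀ b : Bool, (dirOf e t (!b)).2 = (dirOf e t b).1 := by
    intro b; cases b <;> simp [dirOf]
  have hvij : (f (j+1)).1 = (f i).1 := by
    have hj' := ttog t j hjn hjc
    have hi' := ttog t i hin hic
    rw [hj'.2.1, hbitj, hdir, ← hi'.1]
  -- toggles crossed after j have the same orientation at i and j+1
  have key : ∀ (u : T) (k : ℕ), j < k → k + 1 < n → (f k).2 u ≠ (f (k+1)).2 u →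
      (f i).2 u = (f (j+1)).2 u := by
    intro u k hjk hkn hcu
    by_contra hne'
    obtain ⟨k', hk1, hk2, hk3⟩ := exCross u i (j+1) (by omega) (by omega) hne'
    exact hjmax k hjk ⟨u, ⟨hkn, hcu⟩, k', by omega, by omega, hk3⟩
  -- the bit-flipping map preserves steps after j
  have hGstep : ∀ k, j < k → k + 1 < n →
      ToggleStep U e (Gfun (f i).2 (f (j+1)).2 (f k)) (Gfun (f i).2 (f (j+1)).2 (f (k+1))) := by
    intro k hjk hkn
    have hs := hstep k hkn
    simp only [ToggleStep] at hs ⊢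
    rcases hs with ⟨hU', hb⟩ | ⟨s, h1, h2, h3⟩
    · exact Or.inl ⟨hU', congrArg (gfun _ _) hb⟩
    · have hcs : (f k).2 s ≠ (f (k+1)).2 s := by
        rw [h3, Function.update_self]
        cases (f k).2 s <;> simp
      have hps : (f i).2 s = (f (j+1)).2 s := key s k hjk hkn hcs
      refine Or.inr ⟨s, ?_, ?_, ?_⟩
      · show (f k).1 = (dirOf e s (gfun (f i).2 (f (j+1)).2 (f k).2 s)).1
        rw [gfun_eq _ _ _ _ hps]; exact h1
      · show (f (k+1)).1 = (dirOf e s (gfun (f i).2 (f (j+1)).2 (f k).2 s)).2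
        rw [gfun_eq _ _ _ _ hps]; exact h2
      · show gfun (f i).2 (f (j+1)).2 (f (k+1)).2 = _
        funext u
        rw [h3]
        by_cases hu : u = s
        · subst hu
          simp [Gfun, gfun, Function.update_self, hps]
        · simp [Gfun, gfun, Function.update_of_ne hu]
  -- the shorter walk
  set G' : ToggleConfig V T → ToggleConfig V T := Gfun (f i).2 (f (j+1)).2 with hG'
  set l' : List (ToggleConfig V T) := l.take (i+1) ++ (l.drop (j+2)).map G' with hl'
  have htklen : (l.take (i+1)).length = i + 1 := by
    rw [List.length_take]; omega
  have hlen' : l'.length = (i+1) + (n - (j+2)) := by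
    rw [hl', List.length_append, htklen, List.length_map, List.length_drop]
  have hlenlt : l'.length < n := by rw [hlen']; omega
  have hl'pos : 0 < l'.length := by omega
  have hgetL : ∀ (k : ℕ), k ≤ i → ∀ (h : k < l'.length), l'[k] = f k := by
    intro k hk h
    simp only [hl']
    rw [List.getElem_append_left (by omega : k < (l.take (i+1)).length),
      List.getElem_take, ← hfget k (by omega)]
  have hgetR : ∀ (k : ℕ), i + 1 ≤ k → ∀ (h : k < l'.length),
      l'[k] = G' (f (j + 2 + (k - (i+1)))) := by
    intro k hk h
    have hk2 : k < (i+1) + (n - (j+2)) := by rw [← hlen']; exact h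
    simp only [hl']
    rw [List.getElem_append_right (by omega : (l.take (i+1)).length ≤ k),
      List.getElem_map, List.getElem_drop]
    congr 1
    rw [← hfget _ (by omega)]
    congr 1
    omega
  have hGj : G' (f (j+1)) = f i := by
    have h1 : G' (f (j+1)) = ((f (j+1)).1, gfun (f i).2 (f (j+1)).2 (f (j+1)).2) := rfl
    rw [h1, gfun_rho, hvij]
  have hchain' : List.Chain' (ToggleStep U e) l' := by
    refine List.isChain_iff_getElem.mpr ?_
    intro k hk
    have hkk : k + 1 < l'.length := by omega
    have hk2 : k + 1 < (i+1) + (n - (j+2)) := by rw [← hlen']; exact hkk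
    rcases lt_trichotomy k i with hki | hki | hki
    · rw [hgetL k (by omega) (by omega), hgetL (k+1) (by omega) hkk]
      exact hstep k (by omega)
    · rw [hgetL k (by omega) (by omega), hgetR (k+1) (by omega) hkk, hki]
      have hidx : j + 2 + (i + 1 - (i+1)) = j + 1 + 1 := by omega
      rw [hidx, ← hGj]
      exact hGstep (j+1) (by omega) (by omega)
    · rw [hgetR k (by omega) (by omega), hgetR (k+1) (by omega) hkk]
      have hidx : j + 2 + (k + 1 - (i+1)) = (j + 2 + (k - (i+1))) + 1 := by omega
      rw [hidx]
      exact hGstep (j + 2 + (k - (i+1))) (by omega) (by omega)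
  have hhead' : l'.head? = some c₀ := by
    have hl'ne : l' ≠ [] := List.ne_nil_of_length_pos hl'pos
    have h0 : l'[0] = c₀ := by rw [hgetL 0 (by omega) hl'pos, hf0]
    rw [List.head?_eq_head hl'ne]
    exact congrArg some ((List.getElem_zero hl'pos).symm.trans h0)
  rcases eq_or_lt_of_le (show j + 2 ≤ n by omega) with hcase | hcase
  · -- the dropped part is empty: the walk ends at f i
    refine ⟨l', (f i).2, ⟨hchain', hhead', ?_⟩, hlenlt⟩
    rw [List.getLast?_eq_getElem?, List.getElem?_eq_getElem (by omega : l'.length - 1 < l'.length),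
      hgetL (l'.length - 1) (by omega) (by omega), show l'.length - 1 = i from by omega]
    have hfj1 : f (j+1) = (tv, σ) := by
      have : n - 1 = j + 1 := by omega
      rw [← this]; exact hflast
    have hfi1 : (f i).1 = tv := by rw [← hvij, hfj1]
    rw [← hfi1, Prod.mk.eta]
  · -- the dropped part is nonempty: the walk ends at G' (tv, σ)
    refine ⟨l', gfun (f i).2 (f (j+1)).2 σ, ⟨hchain', hhead', ?_⟩, hlenlt⟩
    rw [List.getLast?_eq_getElem?, List.getElem?_eq_getElem (by omega : l'.length - 1 < l'.length),
      hgetR (l'.length - 1) (by omega) (by omega)]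
    have hidx : j + 2 + (l'.length - 1 - (i+1)) = n - 1 := by omega
    rw [hidx, hflast]
    rfl

/-- a walk in a 1-toggle system that traverses some toggle more than once
can be replaced by a strictly shorter walk with the same start configuration and the
same final vertex; hence a shortest walk between two vertices traverses every toggle
at most once. -/
theorem repeated_toggle_shorter_walk [DecidableEq T] (U : V → V → Prop)
    (hU : Symmetric U) (e : T → V × V) (c₀ : ToggleConfig V T) (tv : V) :
    (∀ (l : List (ToggleConfig V T)) (σ : T → Bool) (tg : T),
      IsToggleWalk U e l c₀ (tv, σ) → 2 ≤ travCount l tg →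
      ∃ (l' : List (ToggleConfig V T)) (σ' : T → Bool),
        IsToggleWalk U e l' c₀ (tv, σ') ∧ l'.length < l.length) ∧
    (∀ (l : List (ToggleConfig V T)) (σ : T → Bool),
      IsToggleWalk U e l c₀ (tv, σ) →
      (∀ (l' : List (ToggleConfig V T)) (σ' : T → Bool),
        IsToggleWalk U e l' c₀ (tv, σ') → l.length ≤ l'.length) →
      ∀ tg, travCount l tg ≤ 1) := by
  constructor
  · intro l σ tg hw h2
    exact shorter_walk U e c₀ tv σ tg l hw h2
  · intro l σ hw hmin tg
    by_contra h
    push_neg at h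
    obtain ⟨l', σ', hw', hlen⟩ := shorter_walk U e c₀ tv σ tg l hw (by omega)
    exact absurd (hmin l' σ' hw') (by omega)

end
end

section
/- The state space of a 2-state k-tunnel deterministic reversible gadget is determined by assigning to each of the k tunnels one of the types: trivial (always open both ways or always closed), lock, toggle, or tripwire; conversely, any such assignment yields a deterministic reversible 2-state k-tunnel gadget. -/
lemma classify (P : Bool → Bool → Bool → Prop)
    (hdet : ∀ s d s' s'', P s d s' → P s d s'' → s' = s'')
    (hrev : ∀ s d s', P s d s' → P s' (!d) s) :
    (∀ s d s', P s d s' ↔ s' = s) ∨ (∀ s d s', ¬ P s d s') ∨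
    (∃ s₀ : Bool, ∀ s d s', P s d s' ↔ (s = s₀ ∧ s' = s)) ∨
    (∃ d₀ : Bool, ∀ s d s', P s d s' ↔ (d = xor s d₀ ∧ s' = !s)) ∨
    (∀ s d s', P s d s' ↔ s' = !s) := by
  have e1 : ∀ s d, P s d s → P s (!d) s := fun s d h => hrev s d s h
  by_cases hpF : P false false false <;> by_cases hpT : P true false true <;>
    by_cases ha : P false false true <;> by_cases hb : P false true true
  -- 1: (pF,pT,a,b)
  · exact absurd (hdet false false false true hpF ha) (by decide)
  -- 2: (pF,pT,a,¬b)
  · exact absurd (hdet false false false true hpF ha) (by decide)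
  -- 3: (pF,pT,¬a,b)
  · exact absurd (hdet false true false true (e1 false false hpF) hb) (by decide)
  -- 4: (pF,pT,¬a,¬b)  trivial open
  · refine Or.inl ?_
    have f1 : P false true false := e1 false false hpF
    have f2 : P true true true := e1 true false hpT
    have f3 : ¬ P true true false := fun h => ha (hrev true true false h)
    have f4 : ¬ P true false false := fun h => hb (hrev true false false h)
    intro s d s'
    cases s <;> cases d <;> cases s' <;>
      first
        | exact iff_of_true (by assumption) (by decide)
        | exact iff_of_false (by assumption) (by decide)
  -- 5: (pF,¬pT,a,b)
  · exact absurd (hdet false false false true hpF ha) (by decide)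
  -- 6: (pF,¬pT,a,¬b)
  · exact absurd (hdet false false false true hpF ha) (by decide)
  -- 7: (pF,¬pT,¬a,b)
  · exact absurd (hdet false true false true (e1 false false hpF) hb) (by decide)
  -- 8: (pF,¬pT,¬a,¬b)  lock false
  · refine Or.inr (Or.inr (Or.inl ⟨false, ?_⟩))
    have f1 : P false true false := e1 false false hpF
    have f2 : ¬ P true true true := fun h => hpT (e1 true true h)
    have f3 : ¬ P true true false := fun h => ha (hrev true true false h)
    have f4 : ¬ P true false false := fun h => hb (hrev true false false h)
    intro s d s'
    cases s <;> cases d <;> cases s' <;>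
      first
        | exact iff_of_true (by assumption) (by decide)
        | exact iff_of_false (by assumption) (by decide)
  -- 9: (¬pF,pT,a,b)
  · exact absurd (hdet true true true false (e1 true false hpT) (hrev false false true ha)) (by decide)
  -- 10: (¬pF,pT,a,¬b)
  · exact absurd (hdet true true true false (e1 true false hpT) (hrev false false true ha)) (by decide)
  -- 11: (¬pF,pT,¬a,b)
  · exact absurd (hdet true false true false hpT (hrev false true true hb)) (by decide)
  -- 12: (¬pF,pT,¬a,¬b)  lock true
  · refine Or.inr (Or.inr (Or.inl ⟨true, ?_⟩))
    have f1 : P true true true := e1 true false hpT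
    have f2 : ¬ P false true false := fun h => hpF (e1 false true h)
    have f3 : ¬ P true true false := fun h => ha (hrev true true false h)
    have f4 : ¬ P true false false := fun h => hb (hrev true false false h)
    intro s d s'
    cases s <;> cases d <;> cases s' <;>
      first
        | exact iff_of_true (by assumption) (by decide)
        | exact iff_of_false (by assumption) (by decide)
  -- 13: (¬pF,¬pT,a,b)  tripwire
  · refine Or.inr (Or.inr (Or.inr (Or.inr ?_)))
    have f1 : P true true false := hrev false false true ha
    have f2 : P true false false := hrev false true true hb
    have f3 : ¬ P false true false := fun h => hpF (e1 false true h)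
    have f4 : ¬ P true true true := fun h => hpT (e1 true true h)
    intro s d s'
    cases s <;> cases d <;> cases s' <;>
      first
        | exact iff_of_true (by assumption) (by decide)
        | exact iff_of_false (by assumption) (by decide)
  -- 14: (¬pF,¬pT,a,¬b)  toggle false
  · refine Or.inr (Or.inr (Or.inr (Or.inl ⟨false, ?_⟩)))
    have f1 : P true true false := hrev false false true ha
    have f2 : ¬ P false true false := fun h => hpF (e1 false true h)
    have f3 : ¬ P true true true := fun h => hpT (e1 true true h)
    have f4 : ¬ P true false false := fun h => hb (hrev true false false h)
    intro s d s'
    cases s <;> cases d <;> cases s' <;>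
      first
        | exact iff_of_true (by assumption) (by decide)
        | exact iff_of_false (by assumption) (by decide)
  -- 15: (¬pF,¬pT,¬a,b)  toggle true
  · refine Or.inr (Or.inr (Or.inr (Or.inl ⟨true, ?_⟩)))
    have f1 : P true false false := hrev false true true hb
    have f2 : ¬ P false true false := fun h => hpF (e1 false true h)
    have f3 : ¬ P true true true := fun h => hpT (e1 true true h)
    have f4 : ¬ P true true false := fun h => ha (hrev true true false h)
    intro s d s'
    cases s <;> cases d <;> cases s' <;>
      first
        | exact iff_of_true (by assumption) (by decide)
        | exact iff_of_false (by assumption) (by decide)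
  -- 16: trivial closed
  · refine Or.inr (Or.inl ?_)
    have f1 : ¬ P false true false := fun h => hpF (e1 false true h)
    have f2 : ¬ P true true true := fun h => hpT (e1 true true h)
    have f3 : ¬ P true true false := fun h => ha (hrev true true false h)
    have f4 : ¬ P true false false := fun h => hb (hrev true false false h)
    intro s d s'
    cases s <;> cases d <;> cases s' <;> assumption



section
/- A 2-state `k`-tunnel gadget: states are `Bool`, locations are `Fin k × Bool`
(the two ends of each of the `k` tunnels), and every traversal crosses a tunnel
(from one end `(i, d)` to the other end `(i, !d)`). -/
variable {k : ℕ}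

/-- Tunnel `i` is trivial: always open in both directions with no state change,
or never traversable. -/
def TrivialTunnel (tr : Bool × (Fin k × Bool) → Bool × (Fin k × Bool) → Prop)
    (i : Fin k) : Prop :=
  (∀ s d s', tr (s, (i, d)) (s', (i, !d)) ↔ s' = s) ∨
  (∀ s d s', ¬ tr (s, (i, d)) (s', (i, !d)))

/-- Tunnel `i` is a lock: open in both directions in state `s₀` (without changing the
state) and closed in the other state. -/
def LockTunnel (tr : Bool × (Fin k × Bool) → Bool × (Fin k × Bool) → Prop)
    (i : Fin k) : Prop :=
  ∃ s₀ : Bool, ∀ s d s', tr (s, (i, d)) (s', (i, !d)) ↔ (s = s₀ ∧ s' = s)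

/-- Tunnel `i` is a toggle: in each state it is traversable in exactly one direction
(opposite directions in the two states), and traversing it flips the state. -/
def ToggleTunnel (tr : Bool × (Fin k × Bool) → Bool × (Fin k × Bool) → Prop)
    (i : Fin k) : Prop :=
  ∃ d₀ : Bool, ∀ s d s', tr (s, (i, d)) (s', (i, !d)) ↔ (d = xor s d₀ ∧ s' = !s)

/-- Tunnel `i` is a tripwire: traversable in both directions in both states, and every
traversal flips the state. -/
def TripwireTunnel (tr : Bool × (Fin k × Bool) → Bool × (Fin k × Bool) → Prop)
    (i : Fin k) : Prop :=
  ∀ s d s', tr (s, (i, d)) (s', (i, !d)) ↔ s' = !s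

/-- a 2-state `k`-tunnel gadget (all of whose traversals cross tunnels) is
deterministic and reversible if and only if each of its `k` tunnels is trivial, a lock,
a toggle, or a tripwire.  In particular the state space of a deterministic reversible
2-state `k`-tunnel gadget is determined by such an assignment of tunnel types, and
conversely any such assignment yields a deterministic reversible gadget. -/
theorem two_state_tunnel_classification
    (tr : Bool × (Fin k × Bool) → Bool × (Fin k × Bool) → Prop)
    (htunnel : ∀ s p s' q, tr (s, p) (s', q) → q.1 = p.1 ∧ q.2 = !p.2) :
    ((∀ x y y', tr x y → tr x y' → y = y') ∧ (∀ x y, tr x y → tr y x)) ↔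
    (∀ i : Fin k,
      TrivialTunnel tr i ∨ LockTunnel tr i ∨ ToggleTunnel tr i ∨ TripwireTunnel tr i) := by
  constructor
  · rintro ⟨hdet, hrev⟩ i
    set P : Bool → Bool → Bool → Prop :=
      fun s d s' => tr (s, (i, d)) (s', (i, !d)) with hP
    have hdet' : ∀ s d s' s'', P s d s' → P s d s'' → s' = s'' := by
      intro s d s' s'' h1 h2
      have := hdet _ _ _ h1 h2
      simpa using this
    have hrev' : ∀ s d s', P s d s' → P s' (!d) s := by
      intro s d s' h
      have := hrev _ _ h
      simpa [hP] using this
    rcases classify P hdet' hrev' with h | h | h | h | h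
    · exact Or.inl (Or.inl h)
    · exact Or.inl (Or.inr h)
    · exact Or.inr (Or.inl h)
    · exact Or.inr (Or.inr (Or.inl h))
    · exact Or.inr (Or.inr (Or.inr h))
  · intro hcl
    constructor
    · rintro ⟨s, i, d⟩ ⟨s₁, j₁, e₁⟩ ⟨s₂, j₂, e₂⟩ h1 h2
      obtain ⟨hq1, he1⟩ := htunnel _ _ _ _ h1
      obtain ⟨hq2, he2⟩ := htunnel _ _ _ _ h2
      simp only at hq1 he1 hq2 he2
      subst he1; subst he2
      rw [hq1] at h1; rw [hq2] at h2
      rw [hq1, hq2]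
      suffices hs : s₁ = s₂ by rw [hs]
      rcases hcl i with (h | h) | ⟨s₀, h⟩ | ⟨d₀, h⟩ | h
      · rw [(h s d s₁).mp h1, (h s d s₂).mp h2]
      · exact absurd h1 (h s d s₁)
      · rw [((h s d s₁).mp h1).2, ((h s d s₂).mp h2).2]
      · rw [((h s d s₁).mp h1).2, ((h s d s₂).mp h2).2]
      · rw [(h s d s₁).mp h1, (h s d s₂).mp h2]
    · rintro ⟨s, i, d⟩ ⟨s', j, e⟩ h1
      obtain ⟨hq, he⟩ := htunnel _ _ _ _ h1
      simp only at hq he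
      subst he
      rw [hq] at h1 ⊢
      rcases hcl i with (h | h) | ⟨s₀, h⟩ | ⟨d₀, h⟩ | h
      · have hs := (h s d s').mp h1
        subst hs
        simpa using (h s' (!d) s').mpr rfl
      · exact absurd h1 (h s d s')
      · obtain ⟨hs, hs'⟩ := (h s d s').mp h1
        simpa using (h s' (!d) s).mpr ⟨hs'.trans hs, hs'.symm⟩
      · obtain ⟨hd, hs'⟩ := (h s d s').mp h1
        subst hs'; subst hd
        have : tr (!s, (i, !(xor s d₀))) (s, (i, !(!(xor s d₀)))) :=
          (h (!s) (!(xor s d₀)) s).mpr (by cases s <;> cases d₀ <;> exact ⟨rfl, rfl⟩)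
        simpa using this
      · have hs := (h s d s').mp h1
        subst hs
        have : tr (!s, (i, !d)) (s, (i, !(!d))) :=
          (h (!s) (!d) s).mpr (by cases s <;> rfl)
        simpa using this

end
end

section
/- The crossover gadget construction from four stacked tripwire-lock-tripwire gadgets, arranged so that each of the four straight paths (left-right and top-bottom) passes through the two tripwire tunnels of the two SWLWs whose lock tunnels lie on the orthogonal paths, permits exactly the straight-through traversals (left to right, right to left, top to bottom, bottom to top) and returns the system to its initial state after each traversal. -/
/-- Locations of the crossover construction built from four stacked
tripwire-lock-tripwire (SWLW) gadgets.  `ext d` is the external location on side `d`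
(`d : ZMod 4`, opposite sides differ by 2); `a d` is the point after the lock tunnel of
side `d`'s SWLW; `b d` the point after the first tripwire; `center` the 4-way
intersection. -/
inductive CrossPos : Type
  | ext (d : ZMod 4)
  | a (d : ZMod 4)
  | b (d : ZMod 4)
  | center

/-- The state assigns to each of the four SWLWs whether it is locked (`true`).
Side `d`'s path runs: `ext d` —(lock tunnel of SWLW `d`, passable iff unlocked,
state unchanged)— `a d` —(a tripwire of SWLW `d+1`, flips it)— `b d` —(a tripwire of
SWLW `d+3`, flips it)— `center`.  All moves are reversible. -/
def CrossStep : ((ZMod 4 → Bool) × CrossPos) → ((ZMod 4 → Bool) × CrossPos) → Prop :=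
  fun c c' =>
    (∃ d, c.1 d = false ∧ c'.1 = c.1 ∧
      ((c.2 = .ext d ∧ c'.2 = .a d) ∨ (c.2 = .a d ∧ c'.2 = .ext d))) ∨
    (∃ d, c'.1 = Function.update c.1 (d + 1) (!c.1 (d + 1)) ∧
      ((c.2 = .a d ∧ c'.2 = .b d) ∨ (c.2 = .b d ∧ c'.2 = .a d))) ∨
    (∃ d, c'.1 = Function.update c.1 (d + 3) (!c.1 (d + 3)) ∧
      ((c.2 = .b d ∧ c'.2 = .center) ∨ (c.2 = .center ∧ c'.2 = .b d)))

deriving instance DecidableEq, Fintype for CrossPos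

def invB (d : ZMod 4) (c : (ZMod 4 → Bool) × CrossPos) : Bool :=
  match c.2 with
  | .ext e => (decide (e = d) || decide (e = d + 2)) && decide (c.1 = fun _ => false)
  | .a e => if e = d ∨ e = d + 2 then decide (c.1 = fun _ => false)
            else decide (c.1 = fun _ => true)
  | .b e => if e = d ∨ e = d + 2 then decide (c.1 = fun i => decide (i = e + 1))
            else decide (c.1 = fun i => !decide (i = e + 1))
  | .center => decide (c.1 = fun i => decide (i = d + 1) || decide (i = d + 3))

instance : DecidableRel CrossStep := fun c c' => by
  unfold CrossStep; infer_instance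

theorem inv_step (d : ZMod 4) (c c' : (ZMod 4 → Bool) × CrossPos)
    (h1 : invB d c = true) (h : CrossStep c c') : invB d c' = true := by
  obtain ⟨σ, p⟩ := c; obtain ⟨τ, q⟩ := c'
  rcases h with ⟨e, he, hσ, ⟨hp, hq⟩ | ⟨hp, hq⟩⟩ |
    ⟨e, hσ, ⟨hp, hq⟩ | ⟨hp, hq⟩⟩ | ⟨e, hσ, ⟨hp, hq⟩ | ⟨hp, hq⟩⟩ <;>
    simp only at hp hq hσ ⊢ <;> subst hp hq hσ <;>
    [skip; skip; skip; skip; skip; skip] <;>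
    (try revert he) <;> revert h1 <;> (first | revert σ | revert τ) <;> revert e <;> revert d <;> decide

lemma upd_eq (σ τ : ZMod 4 → Bool) (j : ZMod 4)
    (h : ∀ i, τ i = if i = j then !σ j else σ i) :
    τ = Function.update σ j (!σ j) :=
  funext fun i => by rw [h i, Function.update_apply]

lemma path (d : ZMod 4) :
    Relation.ReflTransGen CrossStep ((fun _ => false), .ext d)
      ((fun _ => false), .ext (d + 2)) := by
  have hne : d + 1 ≠ d + 3 := fun h => absurd (add_left_cancel h) (by decide)
  have hne' : d + 3 ≠ d + 1 := hne.symm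
  have h23 : d + 2 + 3 = d + 1 := by rw [add_assoc]; congr 1
  have h21 : d + 2 + 1 = d + 3 := by rw [add_assoc]; congr 1
  have st1 : CrossStep ((fun _ => false), .ext d) ((fun _ => false), .a d) :=
    Or.inl ⟨d, rfl, rfl, Or.inl ⟨rfl, rfl⟩⟩
  have st2 : CrossStep ((fun _ => false), .a d) ((fun i => decide (i = d + 1)), .b d) := by
    refine Or.inr (Or.inl ⟨d, upd_eq _ _ (d + 1) fun i => ?_, Or.inl ⟨rfl, rfl⟩⟩)
    by_cases h : i = d + 1 <;> simp [h]
  have st3 : CrossStep ((fun i => decide (i = d + 1)), .b d)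
      ((fun i => decide (i = d + 1) || decide (i = d + 3)), .center) := by
    refine Or.inr (Or.inr ⟨d, upd_eq _ _ (d + 3) fun i => ?_, Or.inl ⟨rfl, rfl⟩⟩)
    by_cases h : i = d + 3
    · subst h; simp [hne']
    · simp [h]
  have st4 : CrossStep ((fun i => decide (i = d + 1) || decide (i = d + 3)), .center)
      ((fun i => decide (i = d + 3)), .b (d + 2)) := by
    refine Or.inr (Or.inr ⟨d + 2, ?_, Or.inr ⟨rfl, rfl⟩⟩)
    rw [h23]
    refine upd_eq _ _ (d + 1) fun i => ?_
    by_cases h : i = d + 1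
    · subst h; simp [hne]
    · simp [h]
  have st5 : CrossStep ((fun i => decide (i = d + 3)), .b (d + 2))
      ((fun _ => false), .a (d + 2)) := by
    refine Or.inr (Or.inl ⟨d + 2, ?_, Or.inr ⟨rfl, rfl⟩⟩)
    rw [h21]
    refine upd_eq _ _ (d + 3) fun i => ?_
    by_cases h : i = d + 3 <;> simp [h]
  have st6 : CrossStep ((fun _ => false), .a (d + 2)) ((fun _ => false), .ext (d + 2)) :=
    Or.inl ⟨d + 2, rfl, rfl, Or.inr ⟨rfl, rfl⟩⟩
  exact .tail (.tail (.tail (.tail (.tail (.single st1) st2) st3) st4) st5) st6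

/-- the crossover construction from four SWLWs (all initially unlocked)
permits exactly the straight-through traversals: starting at external side `d` in the
initial state, an external location `d'` can be reached (in some state `σ'`) if and
only if `d'` is `d` itself or the opposite side `d + 2`, and in either case the system
is back in its initial (all-unlocked) state. -/
theorem crossover_construction (d d' : ZMod 4) (σ' : ZMod 4 → Bool) :
    Relation.ReflTransGen CrossStep ((fun _ => false), .ext d) (σ', .ext d') ↔
      (σ' = (fun _ => false) ∧ (d' = d ∨ d' = d + 2)) := by
  constructor
  · intro h
    have H : ∀ y, Relation.ReflTransGen CrossStep ((fun _ => false), .ext d) y →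
        invB d y = true := by
      intro y h
      induction h with
      | refl => simp [invB]
      | tail _ st ih => exact inv_step d _ _ ih st
    have key := H _ h
    simp [invB] at key
    tauto
  · rintro ⟨rfl, rfl | rfl⟩
    · exact .refl
    · exact path d
end

section
/- In the construction of a crossing 2-toggle from two antiparallel 2-toggles, where the two AP2Ts are connected so that the exit of one tunnel of the first leads to the entrance of one tunnel of the second (forming two crossing paths), the composed system has exactly two states and in each state exactly two traversals are possible: from top-left to bottom-right and from top-right to bottom-left (or the reverses in the other state), with every traversal flipping the state. -/
/-- Locations of the construction of a crossing 2-toggle from two antiparallel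
2-toggles: external locations `TL, TR, BL, BR` and internal connection points
`M1, M2`. -/
inductive C2TLoc : Type
  | TL | TR | BL | BR | M1 | M2

/-- The first AP2T (state = first component, `false` initially) has antiparallel
toggle tunnels `TL–M1` (directed `TL→M1` in state `false`) and `M2–BL` (directed
`M2→BL` in state `false`); the second AP2T (second component) has tunnels `M1–BR`
(directed `M1→BR` in state `false`) and `TR–M2` (directed `TR→M2` in state `false`).
Traversing any tunnel flips its gadget's state. -/
def C2TStep : (Bool × Bool) × C2TLoc → (Bool × Bool) × C2TLoc → Prop := fun c c' =>
  (c.1.1 = false ∧ c.2 = .TL ∧ c'.2 = .M1 ∧ c'.1 = (true, c.1.2)) ∨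
  (c.1.1 = true ∧ c.2 = .M1 ∧ c'.2 = .TL ∧ c'.1 = (false, c.1.2)) ∨
  (c.1.1 = false ∧ c.2 = .M2 ∧ c'.2 = .BL ∧ c'.1 = (true, c.1.2)) ∨
  (c.1.1 = true ∧ c.2 = .BL ∧ c'.2 = .M2 ∧ c'.1 = (false, c.1.2)) ∨
  (c.1.2 = false ∧ c.2 = .M1 ∧ c'.2 = .BR ∧ c'.1 = (c.1.1, true)) ∨
  (c.1.2 = true ∧ c.2 = .BR ∧ c'.2 = .M1 ∧ c'.1 = (c.1.1, false)) ∨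
  (c.1.2 = false ∧ c.2 = .TR ∧ c'.2 = .M2 ∧ c'.1 = (c.1.1, true)) ∨
  (c.1.2 = true ∧ c.2 = .M2 ∧ c'.2 = .TR ∧ c'.1 = (c.1.1, false))

/-- The transition relation of a crossing 2-toggle in state `b`: in state `false`
the crossing traversals `TL→BR` and `TR→BL` are possible, in state `true` their
reverses. -/
def C2TTarget (b : Bool) (x y : C2TLoc) : Prop :=
  (b = false ∧ ((x = .TL ∧ y = .BR) ∨ (x = .TR ∧ y = .BL))) ∨
  (b = true ∧ ((x = .BR ∧ y = .TL) ∨ (x = .BL ∧ y = .TR)))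


deriving instance DecidableEq for C2TLoc

instance : Fintype C2TLoc :=
  ⟨⟨↑[C2TLoc.TL, .TR, .BL, .BR, .M1, .M2], by decide⟩, fun x => by cases x <;> decide⟩

instance (b : Bool) (x y : C2TLoc) : Decidable (C2TTarget b x y) := by
  unfold C2TTarget; infer_instance

instance : DecidableRel C2TStep := fun c c' => by unfold C2TStep; infer_instance

def reachList : (Bool × Bool) × C2TLoc → List ((Bool × Bool) × C2TLoc)
  | ((false, false), .TL) => [((false, false), .TL), ((true, false), .M1), ((true, true), .BR)]
  | ((false, false), .TR) => [((false, false), .TR), ((false, true), .M2), ((true, true), .BL)]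
  | ((false, false), .BL) => [((false, false), .BL)]
  | ((false, false), .BR) => [((false, false), .BR)]
  | ((false, false), .M1) => [((false, false), .M1), ((false, true), .BR)]
  | ((false, false), .M2) => [((false, false), .M2), ((true, false), .BL)]
  | ((false, true), .TL) => [((false, true), .TL), ((true, true), .M1)]
  | ((false, true), .TR) => [((false, true), .TR)]
  | ((false, true), .BL) => [((false, true), .BL)]
  | ((false, true), .BR) => [((false, false), .M1), ((false, true), .BR)]
  | ((false, true), .M1) => [((false, true), .M1)]
  | ((false, true), .M2) => [((false, false), .TR), ((false, true), .M2), ((true, true), .BL)]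
  | ((true, false), .TL) => [((true, false), .TL)]
  | ((true, false), .TR) => [((true, false), .TR), ((true, true), .M2)]
  | ((true, false), .BL) => [((false, false), .M2), ((true, false), .BL)]
  | ((true, false), .BR) => [((true, false), .BR)]
  | ((true, false), .M1) => [((false, false), .TL), ((true, false), .M1), ((true, true), .BR)]
  | ((true, false), .M2) => [((true, false), .M2)]
  | ((true, true), .TL) => [((true, true), .TL)]
  | ((true, true), .TR) => [((true, true), .TR)]
  | ((true, true), .BL) => [((false, false), .TR), ((false, true), .M2), ((true, true), .BL)]
  | ((true, true), .BR) => [((false, false), .TL), ((true, false), .M1), ((true, true), .BR)]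
  | ((true, true), .M1) => [((false, true), .TL), ((true, true), .M1)]
  | ((true, true), .M2) => [((true, false), .TR), ((true, true), .M2)]


lemma closure_to_reach {c c' : (Bool × Bool) × C2TLoc}
    (h : Relation.ReflTransGen C2TStep c c') : c' ∈ reachList c := by
  induction h using Relation.ReflTransGen.head_induction_on with
  | refl => revert c'; decide
  | head step _ ih =>
      exact (by decide : ∀ a m t : (Bool × Bool) × C2TLoc,
        C2TStep a m → t ∈ reachList m → t ∈ reachList a) _ _ _ step ih

/-- the composition of two antiparallel 2-toggles (synchronized, both in
state `b`) has exactly two states, and from an external location exactly the crossing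
2-toggle traversals are possible (top-left to bottom-right and top-right to bottom-left
in one state, their reverses in the other), every traversal flipping the state. -/
theorem ap2t_simulates_c2t (b : Bool) (x y : C2TLoc) (σ' : Bool × Bool)
    (hx : x ≠ .M1 ∧ x ≠ .M2) (hy : y ≠ .M1 ∧ y ≠ .M2) :
    Relation.ReflTransGen C2TStep ((b, b), x) (σ', y) ↔
      ((y = x ∧ σ' = (b, b)) ∨ (σ' = (!b, !b) ∧ C2TTarget b x y)) := by
  constructor
  · intro h
    have hm := closure_to_reach h
    clear h
    revert hm
    revert hx hy
    revert b x y σ'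
    decide
  · rintro (⟨rfl, rfl⟩ | ⟨rfl, ht⟩)
    · exact Relation.ReflTransGen.refl
    · rcases ht with ⟨rfl, (⟨rfl, rfl⟩ | ⟨rfl, rfl⟩)⟩ | ⟨rfl, (⟨rfl, rfl⟩ | ⟨rfl, rfl⟩)⟩
      · exact .head (show C2TStep ((false,false),.TL) ((true,false),.M1) by decide)
          (.single (show C2TStep ((true,false),.M1) ((true,true),.BR) by decide))
      · exact .head (show C2TStep ((false,false),.TR) ((false,true),.M2) by decide)
          (.single (show C2TStep ((false,true),.M2) ((true,true),.BL) by decide))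
      · exact .head (show C2TStep ((true,true),.BR) ((true,false),.M1) by decide)
          (.single (show C2TStep ((true,false),.M1) ((false,false),.TL) by decide))
      · exact .head (show C2TStep ((true,true),.BL) ((false,true),.M2) by decide)
          (.single (show C2TStep ((false,true),.M2) ((false,false),.TR) by decide))
end

section
/- If gadget set A simulates gadget g (there is a system of A-gadgets whose external transition behavior is equivalent to g) and gadget set B containing g simulates gadget h, then A together with the branching hallway simulates h. In particular, simulation of gadgets is transitive. -/
/-- A gadget: a set of states with an initial state, a set of locations, and a
transition relation on (state, location) pairs. -/
structure Gadget : Type 1 where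
  St : Type
  Loc : Type
  init : St
  tr : St × Loc → St × Loc → Prop

/-- The branching hallway: one state, three locations, always allowing traversal
between any two distinct locations. -/
def Gadget.hallway : Gadget where
  St := PUnit
  Loc := Fin 3
  init := PUnit.unit
  tr := fun p q => p.2 ≠ q.2

/-- A system of gadgets over a set `A` of gadget types: a collection of gadget
instances drawn from `A` with initial states, a partial matching `conn` of their
locations (the connections), and a choice of external locations, which take part in no
connection. -/
structure GSystem (A : Set Gadget) : Type 1 where
  ι : Type
  pick : ι → Gadget
  mem : ∀ i, pick i ∈ A
  Ext : Type
  conn : (Σ i, (pick i).Loc) → (Σ i, (pick i).Loc) → Prop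
  conn_symm : ∀ a b, conn a b → conn b a
  conn_unique : ∀ a b c, conn a b → conn a c → b = c
  extLoc : Ext → Σ i, (pick i).Loc
  ext_inj : Function.Injective extLoc
  ext_free : ∀ x b, ¬ conn (extLoc x) b

/-- Global states of a system. -/
def GSystem.GState {A : Set Gadget} (S : GSystem A) : Type := ∀ i, (S.pick i).St

/-- The initial global state. -/
def GSystem.initState {A : Set Gadget} (S : GSystem A) : S.GState :=
  fun i => (S.pick i).init

/-- One move of the robot in a system: along a connection (state unchanged), or a
traversal of a single gadget (changing only that gadget's state). -/
def GSystem.step {A : Set Gadget} (S : GSystem A) :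
    (S.GState × Σ i, (S.pick i).Loc) → (S.GState × Σ i, (S.pick i).Loc) → Prop :=
  fun c c' =>
    (S.conn c.2 c'.2 ∧ c'.1 = c.1) ∨
    (∃ (i : S.ι) (a b : (S.pick i).Loc),
      c.2 = ⟨i, a⟩ ∧ c'.2 = ⟨i, b⟩ ∧
      (S.pick i).tr (c.1 i, a) (c'.1 i, b) ∧ ∀ j, j ≠ i → c'.1 j = c.1 j)

/-- Reachability in a system. -/
def GSystem.Reach {A : Set Gadget} (S : GSystem A) :=
  Relation.ReflTransGen S.step

/-- Reachability within a single gadget. -/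
def Gadget.Reach (g : Gadget) := Relation.ReflTransGen g.tr

/-- The system `S` is equivalent to the gadget `g`: there is a bijection between the
external locations of `S` and the locations of `g`, and a correspondence of states
containing the initial states, under which the external transition behaviors match in
both directions. -/
def GEquivalent {A : Set Gadget} (S : GSystem A) (g : Gadget) : Prop :=
  ∃ (f : S.Ext ≃ g.Loc) (R : S.GState → g.St → Prop),
    R S.initState g.init ∧
    (∀ σ s, R σ s → ∀ (x y : S.Ext) σ',
      S.Reach (σ, S.extLoc x) (σ', S.extLoc y) →
      ∃ s', R σ' s' ∧ g.Reach (s, f x) (s', f y)) ∧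
    (∀ σ s, R σ s → ∀ (x y : S.Ext) s',
      g.Reach (s, f x) (s', f y) →
      ∃ σ', R σ' s' ∧ S.Reach (σ, S.extLoc x) (σ', S.extLoc y))

/-- The gadget set `A` simulates the gadget `g`: some system over `A` together with the
branching hallway is equivalent to `g`. -/
def Simulates (A : Set Gadget) (g : Gadget) : Prop :=
  ∃ S : GSystem (A ∪ {Gadget.hallway}), GEquivalent S g

section SelfSim

/-- A system consisting of a single copy of `g`, no connections, all locations external. -/
def singletonSys {D : Set Gadget} {g : Gadget} (hg : g ∈ D) : GSystem D where
  ι := PUnit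
  pick := fun _ => g
  mem := fun _ => hg
  Ext := g.Loc
  conn := fun _ _ => False
  conn_symm := fun _ _ h => h.elim
  conn_unique := fun _ _ _ h => h.elim
  extLoc := fun a => ⟨PUnit.unit, a⟩
  ext_inj := by
    intro a b hab
    have := congrArg (fun q : Σ _ : PUnit, g.Loc => q.2) hab
    exact this
  ext_free := fun _ _ h => h

lemma selfSim {D : Set Gadget} {g : Gadget} (hg : g ∈ D) :
    ∃ S : GSystem D, GEquivalent S g := by
  refine ⟨singletonSys hg, Equiv.refl g.Loc, fun σ s => σ PUnit.unit = s, rfl, ?_, ?_⟩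
  · -- forward
    intro σ s hR x y σ' hr
    refine ⟨σ' PUnit.unit, rfl, ?_⟩
    have key : ∀ c c' : (singletonSys hg).GState × Σ _ : PUnit, g.Loc,
        (singletonSys hg).Reach c c' →
        g.Reach (c.1 PUnit.unit, c.2.2) (c'.1 PUnit.unit, c'.2.2) := by
      intro c c' h
      refine Relation.ReflTransGen.lift (fun c : (singletonSys hg).GState × Σ _ : PUnit, g.Loc => ((c.1 PUnit.unit, c.2.2) : g.St × g.Loc)) ?_ _ _ h
      rintro ⟨τ, q⟩ ⟨τ', q'⟩ (⟨hf, _⟩ | ⟨i, a, b, hq, hq', htr, _⟩)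
      · exact hf.elim
      · cases hq; cases hq'
        exact htr
    have := key _ _ hr
    subst hR; exact this
  · -- backward
    intro σ s hR x y s' hr
    refine ⟨fun _ => s', rfl, ?_⟩
    have key : ∀ p p' : g.St × g.Loc, g.Reach p p' →
        (singletonSys hg).Reach ((fun _ => p.1), ⟨PUnit.unit, p.2⟩)
          ((fun _ => p'.1), ⟨PUnit.unit, p'.2⟩) := by
      intro p p' h
      refine Relation.ReflTransGen.lift
        (fun p : g.St × g.Loc => ((fun _ => p.1, ⟨PUnit.unit, p.2⟩) :
          (singletonSys hg).GState × Σ _ : PUnit, g.Loc)) ?_ _ _ h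
      rintro ⟨u, a⟩ ⟨v, b⟩ htr
      exact Or.inr ⟨PUnit.unit, a, b, rfl, rfl, htr, fun j hj => (hj rfl).elim⟩
    have := key _ _ hr
    have hσ : σ = fun _ => s := by
      funext j; cases j; exact hR
    rw [hσ]
    exact this

end SelfSim
section Comp

open Classical

variable {C D : Set Gadget} (S : GSystem C) (T : ∀ i : S.ι, GSystem D)

/-- Embedding of the locations of the subsystem `T i` into the composed location type. -/
def emb (i : S.ι) (l : Σ j, ((T i).pick j).Loc) :
    Σ p : Σ i : S.ι, (T i).ι, ((T p.1).pick p.2).Loc := ⟨⟨i, l.1⟩, l.2⟩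

lemma emb_fst {i i' : S.ι} {l l'} (h : emb S T i l = emb S T i' l') : i = i' :=
  congrArg (fun q => q.1.1) h

lemma emb_snd {i : S.ι} {l l'} (h : emb S T i l = emb S T i l') : l = l' := by
  rcases l with ⟨j, u⟩; rcases l' with ⟨j', u'⟩
  unfold emb at h
  injection h with h1 h2
  injection h1 with h3 h4
  have hj : j = j' := h4
  subst hj
  have hu : u = u' := eq_of_heq h2
  subst hu
  rfl

variable (fT : ∀ i, (T i).Ext ≃ (S.pick i).Loc)

/-- The location of the composed system corresponding to a location of `S`. -/
def lmap (q : Σ i, (S.pick i).Loc) : Σ p : Σ i : S.ι, (T i).ι, ((T p.1).pick p.2).Loc :=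
  emb S T q.1 ((T q.1).extLoc ((fT q.1).symm q.2))

lemma lmap_inj : Function.Injective (lmap S T fT) := by
  rintro ⟨i, a⟩ ⟨i', a'⟩ h
  have hi : i = i' := emb_fst S T h
  subst hi
  have h2 := emb_snd S T h
  have h3 := (T i).ext_inj h2
  have h4 := congrArg (fT i) h3
  rw [Equiv.apply_symm_apply, Equiv.apply_symm_apply] at h4
  have ha : a = a' := h4
  subst ha
  rfl

/-- The composed system: substitute `T i` for the `i`-th gadget of `S`. -/
def compSys : GSystem D where
  ι := Σ i : S.ι, (T i).ι
  pick := fun p => (T p.1).pick p.2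
  mem := fun p => (T p.1).mem p.2
  Ext := S.Ext
  conn := fun q q' =>
    (∃ i a b, (T i).conn a b ∧ q = emb S T i a ∧ q' = emb S T i b) ∨
    (∃ (i i' : S.ι) (x : (T i).Ext) (x' : (T i').Ext),
      S.conn ⟨i, fT i x⟩ ⟨i', fT i' x'⟩ ∧
      q = emb S T i ((T i).extLoc x) ∧ q' = emb S T i' ((T i').extLoc x'))
  conn_symm := by
    rintro q q' (⟨i, a, b, hc, hq, hq'⟩ | ⟨i, i', x, x', hc, hq, hq'⟩)
    · exact Or.inl ⟨i, b, a, (T i).conn_symm _ _ hc, hq', hq⟩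
    · exact Or.inr ⟨i', i, x', x, S.conn_symm _ _ hc, hq', hq⟩
  conn_unique := by
    rintro q b c (⟨i, a1, b1, hc1, hq1, hb1⟩ | ⟨i, i2, x, x2, hc1, hq1, hb1⟩) <;>
      rintro (⟨i', a1', b1', hc2, hq2, hb2⟩ | ⟨i', i2', x', x2', hc2, hq2, hb2⟩)
    · -- int / int
      have hi : i = i' := emb_fst S T (hq1 ▸ hq2)
      subst hi
      have ha : a1 = a1' := emb_snd S T (hq1 ▸ hq2)
      subst ha
      have hb : b1 = b1' := (T i).conn_unique _ _ _ hc1 hc2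
      rw [hb1, hb2, hb]
    · -- int / ext : contradiction
      have hi : i = i' := emb_fst S T (hq1 ▸ hq2)
      subst hi
      have ha : a1 = (T i).extLoc x' := emb_snd S T (hq1 ▸ hq2)
      subst ha
      exact absurd hc1 ((T i).ext_free x' b1)
    · -- ext / int : contradiction
      have hi : i' = i := emb_fst S T (hq2 ▸ hq1)
      subst hi
      have ha : a1' = (T i').extLoc x := emb_snd S T (hq2 ▸ hq1)
      subst ha
      exact absurd hc2 ((T i').ext_free x b1')
    · -- ext / ext
      have hi : i = i' := emb_fst S T (hq1 ▸ hq2)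
      subst hi
      have hx : (T i).extLoc x = (T i).extLoc x' := emb_snd S T (hq1 ▸ hq2)
      have hx2 : x = x' := (T i).ext_inj hx
      subst hx2
      have h5 := S.conn_unique _ _ _ hc1 hc2
      injection h5 with h6 h7
      subst h6
      have h8 : fT i2 x2 = fT i2 x2' := eq_of_heq h7
      have h9 : x2 = x2' := (fT i2).injective h8
      subst h9
      rw [hb1, hb2]
  extLoc := fun x => lmap S T fT (S.extLoc x)
  ext_inj := fun x y h => S.ext_inj (lmap_inj S T fT h)
  ext_free := by
    intro x b hb
    rcases hx : S.extLoc x with ⟨i0, a0⟩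
    have hb2 : (∃ i a b1, (T i).conn a b1 ∧
        lmap S T fT ⟨i0, a0⟩ = emb S T i a ∧ b = emb S T i b1) ∨
        (∃ (i i' : S.ι) (x1 : (T i).Ext) (x2 : (T i').Ext),
          S.conn ⟨i, fT i x1⟩ ⟨i', fT i' x2⟩ ∧
          lmap S T fT ⟨i0, a0⟩ = emb S T i ((T i).extLoc x1) ∧
          b = emb S T i' ((T i').extLoc x2)) := by
      rw [← hx]; exact hb
    clear hb
    rcases hb2 with ⟨i, a1, b1, hc, hq, _⟩ | ⟨i, i2, x1, x2, hc, hq, _⟩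
    · have hq' : emb S T i0 ((T i0).extLoc ((fT i0).symm a0)) = emb S T i a1 := hq
      have hi : i = i0 := emb_fst S T hq'.symm
      subst hi
      have ha : (T i).extLoc ((fT i).symm a0) = a1 := emb_snd S T hq'
      rw [← ha] at hc
      exact absurd hc ((T i).ext_free _ b1)
    · have hq' : emb S T i0 ((T i0).extLoc ((fT i0).symm a0)) =
        emb S T i ((T i).extLoc x1) := hq
      have hi : i = i0 := emb_fst S T hq'.symm
      subst hi
      have ha : (T i).extLoc ((fT i).symm a0) = (T i).extLoc x1 := emb_snd S T hq'
      have hx1 : x1 = (fT i).symm a0 := ((T i).ext_inj ha).symm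
      subst hx1
      rw [Equiv.apply_symm_apply] at hc
      have : S.conn (S.extLoc x) ⟨i2, fT i2 x2⟩ := by rw [hx]; exact hc
      exact absurd this (S.ext_free x _)

/-- Restriction of a composed global state to the subsystem at `i`. -/
def res (σ : (compSys S T fT).GState) (i : S.ι) : (T i).GState := fun j => σ ⟨i, j⟩

end Comp
section Upd

open Classical

/-- Dependent function update with a classical decidability instance baked in. -/
noncomputable def gupdate {ι : Type} {β : ι → Type} (f : ∀ i, β i) (i : ι) (v : β i) :
    ∀ j, β j :=
  fun j => if h : j = i then cast (congrArg β h).symm v else f j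

@[simp] lemma gupdate_same {ι : Type} {β : ι → Type} (f : ∀ i, β i) (i : ι) (v : β i) :
    gupdate f i v i = v := by
  unfold gupdate
  rw [dif_pos rfl]
  rfl

@[simp] lemma gupdate_noteq {ι : Type} {β : ι → Type} (f : ∀ i, β i) (i : ι) (v : β i)
    {j : ι} (h : j ≠ i) : gupdate f i v j = f j := by
  unfold gupdate
  rw [dif_neg h]

end Upd
section Lift

open Classical

variable {C D : Set Gadget} (S : GSystem C) (T : ∀ i : S.ι, GSystem D)
  (fT : ∀ i, (T i).Ext ≃ (S.pick i).Loc)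

/-- Lift a reach of the subsystem `T i` to a reach of the composed system. -/
lemma liftT (i : S.ι) :
    ∀ c c' : (T i).GState × Σ j, ((T i).pick j).Loc, (T i).Reach c c' →
    ∀ σ' : (compSys S T fT).GState, res S T fT σ' i = c.1 →
    ∃ τ' : (compSys S T fT).GState, res S T fT τ' i = c'.1 ∧
      (∀ k, k ≠ i → res S T fT τ' k = res S T fT σ' k) ∧
      (compSys S T fT).Reach (σ', emb S T i c.2) (τ', emb S T i c'.2) := by
  intro c c' h
  induction h using Relation.ReflTransGen.head_induction_on with
  | refl => exact fun σ' hσ => ⟨σ', hσ, fun _ _ => rfl, Relation.ReflTransGen.refl⟩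
  | @head cc c2 hstep _ ih =>
    obtain ⟨ρ1, l1⟩ := cc
    obtain ⟨ρ2, l2⟩ := c2
    intro σ' hσ
    rcases hstep with ⟨hc, hst⟩ | ⟨j, a, b, hc2, hc2', htr, hoth⟩
    · -- connection step inside T i
      have hst' : ρ2 = ρ1 := hst
      obtain ⟨τ', h1, h2, h3⟩ := ih σ' (by rw [hst']; exact hσ)
      refine ⟨τ', h1, h2, Relation.ReflTransGen.head ?_ h3⟩
      exact Or.inl ⟨Or.inl ⟨i, l1, l2, hc, rfl, rfl⟩, rfl⟩
    · -- traversal step inside T i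
      have hl1 : l1 = ⟨j, a⟩ := hc2
      have hl2 : l2 = ⟨j, b⟩ := hc2'
      subst hl1; subst hl2
      have hres : res S T fT (gupdate σ' ⟨i, j⟩ (ρ2 j)) i = ρ2 := by
        funext j'
        show gupdate σ' ⟨i, j⟩ (ρ2 j) ⟨i, j'⟩ = ρ2 j'
        by_cases hj : j' = j
        · subst hj; exact gupdate_same _ _ _
        · have hne : (⟨i, j'⟩ : Σ i : S.ι, (T i).ι) ≠ ⟨i, j⟩ := by
            intro hh; injection hh with h1 h2; exact hj h2
          refine (gupdate_noteq _ _ _ hne).trans ?_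
          have e1 : σ' ⟨i, j'⟩ = ρ1 j' := congrFun hσ j'
          exact e1.trans (hoth j' hj).symm
      have hoth2 : ∀ k, k ≠ i →
          res S T fT (gupdate σ' ⟨i, j⟩ (ρ2 j)) k = res S T fT σ' k := by
        intro k hk
        funext j'
        show gupdate σ' ⟨i, j⟩ (ρ2 j) ⟨k, j'⟩ = σ' ⟨k, j'⟩
        have hne : (⟨k, j'⟩ : Σ i : S.ι, (T i).ι) ≠ ⟨i, j⟩ := by
          intro hh; injection hh with h1 h2; exact hk h1
        exact gupdate_noteq _ _ _ hne
      obtain ⟨τ', h1, h2, h3⟩ := ih (gupdate σ' ⟨i, j⟩ (ρ2 j)) hres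
      refine ⟨τ', h1, fun k hk => (h2 k hk).trans (hoth2 k hk),
        Relation.ReflTransGen.head ?_ h3⟩
      refine Or.inr ⟨⟨i, j⟩, a, b, rfl, rfl, ?_,
        fun q hq =>
        show gupdate σ' ⟨i, j⟩ (ρ2 j) q = σ' q from gupdate_noteq _ _ _ hq⟩
      show ((T i).pick j).tr (σ' ⟨i, j⟩, a) (gupdate σ' ⟨i, j⟩ (ρ2 j) ⟨i, j⟩, b)
      have e1 : σ' ⟨i, j⟩ = ρ1 j := congrFun hσ j
      exact (congrArg₂ (fun u v => ((T i).pick j).tr (u, a) (v, b)) e1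
        (gupdate_same σ' ⟨i, j⟩ (ρ2 j))).mpr htr

/-- Lift a reach of the gadget `S.pick i` to a reach of `S`. -/
lemma liftg {C : Set Gadget} (S : GSystem C) (i : S.ι) :
    ∀ p p' : (S.pick i).St × (S.pick i).Loc, (S.pick i).Reach p p' →
    ∀ σ : S.GState, σ i = p.1 →
    ∃ τ : S.GState, τ i = p'.1 ∧ (∀ k, k ≠ i → τ k = σ k) ∧
      S.Reach (σ, ⟨i, p.2⟩) (τ, ⟨i, p'.2⟩) := by
  intro p p' h
  induction h using Relation.ReflTransGen.head_induction_on with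
  | refl => exact fun σ hσ => ⟨σ, hσ, fun _ _ => rfl, Relation.ReflTransGen.refl⟩
  | @head pp p2 hstep _ ih =>
    obtain ⟨s1, l1⟩ := pp
    obtain ⟨s2, l2⟩ := p2
    intro σ hσ
    obtain ⟨τ, h1, h2, h3⟩ := ih (gupdate σ i s2) (gupdate_same _ _ _)
    refine ⟨τ, h1, fun k hk => (h2 k hk).trans (gupdate_noteq _ _ _ hk),
      Relation.ReflTransGen.head ?_ h3⟩
    refine Or.inr ⟨i, l1, l2, rfl, rfl, ?_,
      fun k hk => show gupdate σ i s2 k = σ k from gupdate_noteq _ _ _ hk⟩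
    show (S.pick i).tr (σ i, l1) (gupdate σ i s2 i, l2)
    exact (congrArg₂ (fun u v => (S.pick i).tr (u, l1) (v, l2)) hσ
      (gupdate_same σ i s2)).mpr hstep

/-- Lift a reach of `S` to a reach of the composed system. -/
lemma liftS (RT : ∀ i, (T i).GState → (S.pick i).St → Prop)
    (hTbwd : ∀ i, ∀ ρ s, RT i ρ s → ∀ (x y : (T i).Ext) s',
      (S.pick i).Reach (s, fT i x) (s', fT i y) →
      ∃ ρ', RT i ρ' s' ∧ (T i).Reach (ρ, (T i).extLoc x) (ρ', (T i).extLoc y)) :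
    ∀ c c' : S.GState × Σ i, (S.pick i).Loc, S.Reach c c' →
    ∀ σ' : (compSys S T fT).GState, (∀ k, RT k (res S T fT σ' k) (c.1 k)) →
    ∃ τ' : (compSys S T fT).GState, (∀ k, RT k (res S T fT τ' k) (c'.1 k)) ∧
      (compSys S T fT).Reach (σ', lmap S T fT c.2) (τ', lmap S T fT c'.2) := by
  intro c c' h
  induction h using Relation.ReflTransGen.head_induction_on with
  | refl => exact fun σ' hσ => ⟨σ', hσ, Relation.ReflTransGen.refl⟩
  | @head cc c2 hstep _ ih =>
    obtain ⟨σ1, q1⟩ := cc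
    obtain ⟨σ2, q2⟩ := c2
    intro σ' hσ
    rcases hstep with ⟨hc, hst⟩ | ⟨i, a, b, hc2, hc2', htr, hoth⟩
    · -- connection step of S
      have hst' : σ2 = σ1 := hst
      obtain ⟨τ', h1, h2⟩ := ih σ' (by intro k; rw [hst']; exact hσ k)
      refine ⟨τ', h1, Relation.ReflTransGen.head ?_ h2⟩
      refine Or.inl ⟨Or.inr ⟨q1.1, q2.1, (fT q1.1).symm q1.2, (fT q2.1).symm q2.2,
        ?_, rfl, rfl⟩, rfl⟩
      rw [Equiv.apply_symm_apply, Equiv.apply_symm_apply]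
      exact hc
    · -- traversal step of S at gadget i
      have hq1 : q1 = ⟨i, a⟩ := hc2
      have hq2 : q2 = ⟨i, b⟩ := hc2'
      subst hq1; subst hq2
      have hreach' : (S.pick i).Reach (σ1 i, fT i ((fT i).symm a))
          (σ2 i, fT i ((fT i).symm b)) := by
        rw [Equiv.apply_symm_apply, Equiv.apply_symm_apply]
        exact Relation.ReflTransGen.single htr
      obtain ⟨ρ, hρ, hTr⟩ := hTbwd i _ _ (hσ i) ((fT i).symm a) ((fT i).symm b) _ hreach'
      obtain ⟨σ2', hres, hoth2, hreach2⟩ :=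
        liftT S T fT i (res S T fT σ' i, (T i).extLoc ((fT i).symm a))
          (ρ, (T i).extLoc ((fT i).symm b)) hTr σ' rfl
      have hpre : ∀ k, RT k (res S T fT σ2' k) (σ2 k) := by
        intro k
        by_cases hk : k = i
        · subst hk; rw [hres]; exact hρ
        · have e : σ2 k = σ1 k := hoth k hk
          rw [hoth2 k hk, e]
          exact hσ k
      obtain ⟨τ', h1, h2⟩ := ih σ2' hpre
      exact ⟨τ', h1, Relation.ReflTransGen.trans hreach2 h2⟩

end Lift
section Fwd

open Classical

variable {C D : Set Gadget} (S : GSystem C) (T : ∀ i : S.ι, GSystem D)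
  (fT : ∀ i, (T i).Ext ≃ (S.pick i).Loc)

/-- The key invariant: any configuration of the composed system reachable from an
external-style configuration decomposes as a reach in `S` followed by a partial
reach inside a single subsystem. -/
lemma fwdInv (RT : ∀ i, (T i).GState → (S.pick i).St → Prop)
    (hTfwd : ∀ i, ∀ ρ s, RT i ρ s → ∀ (x y : (T i).Ext) ρ',
      (T i).Reach (ρ, (T i).extLoc x) (ρ', (T i).extLoc y) →
      ∃ s', RT i ρ' s' ∧ (S.pick i).Reach (s, fT i x) (s', fT i y))
    (σ0 : S.GState) (q0 : Σ i, (S.pick i).Loc) (σ' : (compSys S T fT).GState)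
    (hR0 : ∀ k, RT k (res S T fT σ' k) (σ0 k)) :
    ∀ c : (compSys S T fT).GState × Σ p : Σ i : S.ι, (T i).ι, ((T p.1).pick p.2).Loc,
    (compSys S T fT).Reach (σ', lmap S T fT q0) c →
    ∃ (σ : S.GState) (a : (S.pick c.2.1.1).Loc) (ρ : (T c.2.1.1).GState),
      S.Reach (σ0, q0) (σ, ⟨c.2.1.1, a⟩) ∧
      (∀ k, k ≠ c.2.1.1 → RT k (res S T fT c.1 k) (σ k)) ∧
      RT c.2.1.1 ρ (σ c.2.1.1) ∧
      (T c.2.1.1).Reach (ρ, (T c.2.1.1).extLoc ((fT c.2.1.1).symm a))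
        (res S T fT c.1 c.2.1.1, ⟨c.2.1.2, c.2.2⟩) := by
  intro c hc
  induction hc with
  | refl =>
    exact ⟨σ0, q0.2, res S T fT σ' q0.1, Relation.ReflTransGen.refl,
      fun k _ => hR0 k, hR0 q0.1, Relation.ReflTransGen.refl⟩
  | @tail cmid cnew hrest hstep ih =>
    obtain ⟨τ', loc⟩ := cmid
    obtain ⟨⟨i, j⟩, ℓ⟩ := loc
    obtain ⟨τ2', loc2⟩ := cnew
    obtain ⟨⟨i2, j2⟩, ℓ2⟩ := loc2
    obtain ⟨σ, a, ρ, hS1, hRoth, hRρ, hTreach⟩ := ih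
    rcases hstep with ⟨hconn, hst⟩ | ⟨p, a0, b0, hc2, hc2', htr, hoth⟩
    · -- a connection step
      have hτ : τ2' = τ' := hst
      subst hτ
      rcases hconn with ⟨i0, l1, l2, hcn, hq, hq'⟩ | ⟨i0, i1, x0, x1, hSc, hq, hq'⟩
      · -- internal connection of some T i0
        have hi : i = i0 :=
          emb_fst S T (show emb S T i ⟨j, ℓ⟩ = emb S T i0 l1 from hq)
        subst hi
        have hl1 : (⟨j, ℓ⟩ : Σ j, ((T i).pick j).Loc) = l1 :=
          emb_snd S T (show emb S T i ⟨j, ℓ⟩ = emb S T i l1 from hq)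
        have hi2 : i = i2 :=
          (emb_fst S T (show emb S T i2 ⟨j2, ℓ2⟩ = emb S T i l2 from hq')).symm
        subst hi2
        have hl2 : (⟨j2, ℓ2⟩ : Σ j, ((T i).pick j).Loc) = l2 :=
          emb_snd S T (show emb S T i ⟨j2, ℓ2⟩ = emb S T i l2 from hq')
        refine ⟨σ, a, ρ, hS1, hRoth, hRρ, Relation.ReflTransGen.tail hTreach ?_⟩
        refine Or.inl ⟨?_, rfl⟩
        show (T i).conn ⟨j, ℓ⟩ ⟨j2, ℓ2⟩
        rw [hl1, hl2]
        exact hcn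
      · -- connection between subsystems, following a connection of S
        have hi : i = i0 := emb_fst S T
          (show emb S T i ⟨j, ℓ⟩ = emb S T i0 ((T i0).extLoc x0) from hq)
        subst hi
        have hl1 : (⟨j, ℓ⟩ : Σ j, ((T i).pick j).Loc) = (T i).extLoc x0 :=
          emb_snd S T (show emb S T i ⟨j, ℓ⟩ = emb S T i ((T i).extLoc x0) from hq)
        have hi2 : i1 = i2 := (emb_fst S T
          (show emb S T i2 ⟨j2, ℓ2⟩ = emb S T i1 ((T i1).extLoc x1) from hq')).symm
        subst hi2
        have hl2 : (⟨j2, ℓ2⟩ : Σ j, ((T i1).pick j).Loc) = (T i1).extLoc x1 :=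
          emb_snd S T (show emb S T i1 ⟨j2, ℓ2⟩ = emb S T i1 ((T i1).extLoc x1) from hq')
        rw [hl1] at hTreach
        obtain ⟨s1, hs1R, hgreach⟩ :=
          hTfwd i ρ (σ i) hRρ ((fT i).symm a) x0 (res S T fT τ2' i) hTreach
        rw [Equiv.apply_symm_apply] at hgreach
        obtain ⟨τ1, hτ1, hτoth, hτreach⟩ := liftg S i (σ i, a) (s1, fT i x0) hgreach σ rfl
        have hconnS : S.step (τ1, ⟨i, fT i x0⟩) (τ1, ⟨i1, fT i1 x1⟩) :=
          Or.inl ⟨hSc, rfl⟩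
        refine ⟨τ1, fT i1 x1, res S T fT τ2' i1, ?_, ?_, ?_, ?_⟩
        · exact Relation.ReflTransGen.tail (hS1.trans hτreach) hconnS
        · intro k hk
          by_cases hki : k = i
          · subst hki; rw [hτ1]; exact hs1R
          · rw [hτoth k hki]; exact hRoth k hki
        · by_cases hki : i1 = i
          · subst hki; rw [hτ1]; exact hs1R
          · rw [hτoth i1 hki]; exact hRoth i1 hki
        · rw [Equiv.symm_apply_apply, ← hl2]
          exact Relation.ReflTransGen.refl
    · -- a traversal step inside one gadget of one subsystem
      have hp : p = ⟨i, j⟩ := (congrArg Sigma.fst hc2).symm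
      subst hp
      have ha0 : ℓ = a0 := by
        have h5 := emb_snd S T (show emb S T i ⟨j, ℓ⟩ = emb S T i ⟨j, a0⟩ from hc2)
        injection h5
      subst ha0
      have hij : (⟨i2, j2⟩ : Σ i : S.ι, (T i).ι) = ⟨i, j⟩ := congrArg Sigma.fst hc2'
      have hi2 : i = i2 := (congrArg Sigma.fst hij).symm
      subst hi2
      have hj2 : j = j2 := by
        injection hij with e1 e2
        exact e2.symm
      subst hj2
      have hb0 : ℓ2 = b0 := by
        have h5 := emb_snd S T (show emb S T i ⟨j, ℓ2⟩ = emb S T i ⟨j, b0⟩ from hc2')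
        injection h5
      subst hb0
      refine ⟨σ, a, ρ, hS1, ?_, hRρ, Relation.ReflTransGen.tail hTreach ?_⟩
      · intro k hk
        have hres : res S T fT τ2' k = res S T fT τ' k := by
          funext j'
          refine hoth ⟨k, j'⟩ ?_
          intro hh
          exact hk (congrArg Sigma.fst hh)
        rw [hres]
        exact hRoth k hk
      · refine Or.inr ⟨j, ℓ, ℓ2, rfl, rfl, htr, ?_⟩
        intro j' hj'
        refine hoth ⟨i, j'⟩ ?_
        intro hh
        injection hh with e1 e2
        exact hj' e2

end Fwd
/-- Substitution: if each gadget of the system `S` can be simulated over `D`, then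
anything equivalent to `S` is equivalent to a system over `D`. -/
lemma substEquiv {C D : Set Gadget} (S : GSystem C) (h : Gadget)
    (hSh : GEquivalent S h)
    (hT : ∀ i : S.ι, ∃ T : GSystem D, GEquivalent T (S.pick i)) :
    ∃ S' : GSystem D, GEquivalent S' h := by
  obtain ⟨f, Rh, hinit, hfwd, hbwd⟩ := hSh
  simp only [GEquivalent] at hT
  choose T fT RT hTinit hTfwd hTbwd using hT
  refine ⟨compSys S T fT, f,
    (fun σ' s => ∃ σ, Rh σ s ∧ ∀ k, RT k (res S T fT σ' k) (σ k)),
    ⟨S.initState, hinit, fun k => hTinit k⟩, ?_, ?_⟩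
  · -- forward
    rintro σ' s ⟨σ, hRh, hRT⟩ x y τ' hreach
    rcases hy : S.extLoc y with ⟨iy, ay⟩
    have hreach' : (compSys S T fT).Reach (σ', lmap S T fT (S.extLoc x))
        (τ', lmap S T fT ⟨iy, ay⟩) := by
      rw [← hy]; exact hreach
    obtain ⟨σ1, a, ρ, hS1, hRoth, hRρ, hTreach⟩ :=
      fwdInv S T fT RT hTfwd σ (S.extLoc x) σ' hRT (τ', lmap S T fT ⟨iy, ay⟩) hreach'
    have hTreach' : (T iy).Reach (ρ, (T iy).extLoc ((fT iy).symm a))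
        (res S T fT τ' iy, (T iy).extLoc ((fT iy).symm ay)) := hTreach
    obtain ⟨s1, hs1R, hgreach⟩ :=
      hTfwd iy ρ (σ1 iy) hRρ ((fT iy).symm a) ((fT iy).symm ay) _ hTreach'
    replace hgreach : (S.pick iy).Reach (σ1 iy, a) (s1, ay) := (congrArg₂ (fun z w => (S.pick iy).Reach (σ1 iy, z) (s1, w)) (Equiv.apply_symm_apply (fT iy) a) (Equiv.apply_symm_apply (fT iy) ay)).mp hgreach
    obtain ⟨τ1, hτ1, hτoth, hτreach⟩ := liftg S iy (σ1 iy, a) (s1, ay) hgreach σ1 rfl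
    have hfull : S.Reach (σ, S.extLoc x) (τ1, S.extLoc y) := by
      rw [hy]
      exact hS1.trans hτreach
    obtain ⟨s', hRh', hhreach⟩ := hfwd σ s hRh x y τ1 hfull
    refine ⟨s', ⟨τ1, hRh', ?_⟩, hhreach⟩
    intro k
    by_cases hk : k = iy
    · subst hk; rw [hτ1]; exact hs1R
    · rw [hτoth k hk]; exact hRoth k hk
  · -- backward
    rintro σ' s ⟨σ, hRh, hRT⟩ x y s' hr
    obtain ⟨τ, hRh', hSr⟩ := hbwd σ s hRh x y s' hr
    obtain ⟨τ', hRT', hr'⟩ :=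
      liftS S T fT RT hTbwd (σ, S.extLoc x) (τ, S.extLoc y) hSr σ' hRT
    exact ⟨τ', ⟨τ, hRh', hRT'⟩, hr'⟩
/-- if gadget set `A` simulates gadget `g`, and gadget set `B` containing
`g` (each of whose gadgets `A` simulates) simulates gadget `h`, then `A` together with
the branching hallway simulates `h`.  In particular, simulation of gadgets is
transitive. -/
theorem simulation_transitive (A B : Set Gadget) (g h : Gadget)
    (hAg : Simulates A g) (hgB : g ∈ B) (hBh : Simulates B h)
    (hAB : ∀ g' ∈ B, Simulates A g') :
    Simulates A h := by
  obtain ⟨SB, hSB⟩ := hBh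
  have hT : ∀ i : SB.ι, ∃ T : GSystem (A ∪ {Gadget.hallway}),
      GEquivalent T (SB.pick i) := by
    intro i
    rcases SB.mem i with hmem | hmem
    · exact hAB _ hmem
    · exact selfSim (Or.inr hmem)
  exact substEquiv SB h hSB hT
end

section
/- In any traversal of the NTL-simulating construction (entering and exiting at external locations), each of the three distinguished cuts—the pair of upper pathways of the outer toggles, the pair of horizontal pathways of the middle toggles, and the pair of upper pathways of the bottom toggles—is crossed an even number of times, and therefore each pair of toggles in the construction ends in a configuration where both members have been flipped an equal parity number of times (both in or both out, both left or both right). -/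
/-- Parity of flips of a boolean sequence determines whether endpoints agree. -/
lemma flip_parity (b : ℕ → Bool) (m : ℕ) :
    (b m = b 0) ↔ Even (((Finset.range m).filter fun j => b j ≠ b (j + 1)).card) := by
  induction m with
  | zero => simp
  | succ m ih =>
    rw [Finset.range_add_one, Finset.filter_insert]
    by_cases hbm : b m = b (m + 1)
    · simp only [hbm, ne_eq, not_true_eq_false, if_false]
      rw [← ih, hbm]
    · rw [if_pos hbm, Finset.card_insert_of_notMem (by simp)]
      rw [Nat.even_add_one, ← ih]
      constructor
      · intro h hbm0
        exact hbm (hbm0.trans h.symm)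
      · intro h
        cases hb0 : b 0 <;> cases hbm1 : b (m+1) <;> cases hbmm : b m <;>
          simp_all
  
/-- cut parities in the NTL-simulating construction.  A traversal is a
walk `f 0, f 1, …, f m` through the construction, beginning and ending at external
locations, which lie outside each of the three distinguished planar regions
(`A i p = true` means position `p` is inside region `i`).  The two members of toggle
pair `i` have orientations `g i`, `h i` (as functions of time), and each crossing of
cut `i` flips exactly one member of pair `i`, while steps that do not cross cut `i`
flip neither.  Then each cut is crossed an even number of times, and each toggle pair
ends with both members flipped an equal parity number of times (so paired toggles stay
synchronized). -/
theorem ntl_cut_parity {Pos : Type*} (m : ℕ) (f : ℕ → Pos)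
    (A : Fin 3 → Pos → Bool) (g h : Fin 3 → ℕ → Bool)
    (hstart : ∀ i, A i (f 0) = false) (hend : ∀ i, A i (f m) = false)
    (hflip : ∀ i, ∀ j < m,
      (xor (g i j != g i (j + 1)) (h i j != h i (j + 1))) =
        (A i (f j) != A i (f (j + 1))))
    (hstable : ∀ i, ∀ j < m, A i (f j) = A i (f (j + 1)) →
      g i j = g i (j + 1) ∧ h i j = h i (j + 1)) :
    ∀ i : Fin 3,
      Even (((Finset.range m).filter fun j => A i (f j) ≠ A i (f (j + 1))).card) ∧
      ((g i m = g i 0) ↔ (h i m = h i 0)) := by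
  intro i
  have hcross : Even (((Finset.range m).filter fun j => A i (f j) ≠ A i (f (j + 1))).card) := by
    rw [← flip_parity (fun j => A i (f j)) m]
    rw [hstart i, hend i]
  refine ⟨hcross, ?_⟩
  -- parity of g-flips + h-flips equals parity of crossings
  have key : Even ((((Finset.range m).filter fun j => g i j ≠ g i (j + 1)).card) +
      (((Finset.range m).filter fun j => h i j ≠ h i (j + 1)).card)) := by
    have hz : ((((Finset.range m).filter fun j => g i j ≠ g i (j + 1)).card : ZMod 2) +
        (((Finset.range m).filter fun j => h i j ≠ h i (j + 1)).card : ZMod 2)) =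
        ((((Finset.range m).filter fun j => A i (f j) ≠ A i (f (j + 1))).card : ZMod 2)) := by
      simp only [Finset.card_filter, Nat.cast_sum, ← Finset.sum_add_distrib]
      refine Finset.sum_congr rfl ?_
      intro j hj
      rw [Finset.mem_range] at hj
      have hf := hflip i j hj
      have hs := hstable i j hj
      by_cases hA : A i (f j) = A i (f (j + 1))
      · obtain ⟨hg, hh⟩ := hs hA
        simp [hg, hh, hA]
      · cases hgc : (g i j != g i (j + 1)) <;> cases hhc : (h i j != h i (j + 1)) <;>
          rw [hgc, hhc] at hf <;> simp_all [bne_iff_ne]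
    have hcz : ((((Finset.range m).filter fun j => A i (f j) ≠ A i (f (j + 1))).card : ZMod 2)) = 0 := by
      exact (ZMod.natCast_eq_zero_iff _ 2).mpr hcross.two_dvd
    rw [hcz, ← Nat.cast_add] at hz
    exact even_iff_two_dvd.mpr ((ZMod.natCast_eq_zero_iff _ 2).mp hz)

  rw [flip_parity (fun j => g i j) m, flip_parity (fun j => h i j) m]
  rcases Nat.even_add.mp key with hiff
  exact hiff
end

section
/- In the NWT-to-AP2T construction, where two noncrossing wire-toggle gadgets are connected by identifying a tripwire location of one with a tripwire location of the other (so that any traversal of either toggle tunnel necessarily crosses both tripwires... specifically each toggle traversal also crosses the other gadget's tripwire), the two gadgets' states remain synchronized under all reachable transitions, and the composed system's external behavior equals that of an antiparallel 2-toggle. -/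
/-- Locations of the construction of an antiparallel 2-toggle from two noncrossing
wire-toggles (NWTs).  `TL, TR, BL, BR` are external; `M` joins the toggle tunnel of
gadget 1 with the tripwire of gadget 2 (top tunnel), `N` joins the toggle tunnel of
gadget 2 with the tripwire of gadget 1 (bottom tunnel). -/
inductive AP2TLoc : Type
  | TL | TR | BL | BR | M | N

/-- The state is the pair of NWT states `(a, b)`.  Top tunnel:
`TR —(tripwire of gadget 2, flips b)— M —(toggle of gadget 1: M→TL when a = false,
TL→M when a = true, flips a)— TL`.  Bottom tunnel: `BL —(toggle of gadget 2: BL→N when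
b = false, N→BL when b = true, flips b)— N —(tripwire of gadget 1, flips a)— BR`.
Thus any traversal of either toggle tunnel also crosses the other gadget's tripwire. -/
def NWTStep : (Bool × Bool) × AP2TLoc → (Bool × Bool) × AP2TLoc → Prop := fun c c' =>
  (c.1.1 = false ∧ c.2 = .M ∧ c'.2 = .TL ∧ c'.1 = (true, c.1.2)) ∨
  (c.1.1 = true ∧ c.2 = .TL ∧ c'.2 = .M ∧ c'.1 = (false, c.1.2)) ∨
  (((c.2 = .M ∧ c'.2 = .TR) ∨ (c.2 = .TR ∧ c'.2 = .M)) ∧ c'.1 = (c.1.1, !c.1.2)) ∨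
  (c.1.2 = false ∧ c.2 = .BL ∧ c'.2 = .N ∧ c'.1 = (c.1.1, true)) ∨
  (c.1.2 = true ∧ c.2 = .N ∧ c'.2 = .BL ∧ c'.1 = (c.1.1, false)) ∨
  (((c.2 = .N ∧ c'.2 = .BR) ∨ (c.2 = .BR ∧ c'.2 = .N)) ∧ c'.1 = (!c.1.1, c.1.2))

/-- The transition relation of an antiparallel 2-toggle in state `b`: in state `false`
the traversals `TR→TL` (top) and `BL→BR` (bottom) are possible; in state `true` their
reverses. -/
def AP2TTarget (b : Bool) (x y : AP2TLoc) : Prop :=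
  (b = false ∧ ((x = .TR ∧ y = .TL) ∨ (x = .BL ∧ y = .BR))) ∨
  (b = true ∧ ((x = .TL ∧ y = .TR) ∨ (x = .BR ∧ y = .BL)))


deriving instance DecidableEq for AP2TLoc

instance : Fintype AP2TLoc :=
  ⟨⟨↑[AP2TLoc.TL, .TR, .BL, .BR, .M, .N], by decide⟩, fun x => by cases x <;> decide⟩

instance (c c' : (Bool × Bool) × AP2TLoc) : Decidable (NWTStep c c') := by
  unfold NWTStep; infer_instance

instance (b : Bool) (x y : AP2TLoc) : Decidable (AP2TTarget b x y) := by
  unfold AP2TTarget; infer_instance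

/-- The reachable set from `((b,b), x)` for external `x`. -/
def reachSet : Bool → AP2TLoc → List ((Bool × Bool) × AP2TLoc)
  | false, .TL => [((false,false),.TL)]
  | false, .TR => [((false,false),.TR),((false,true),.M),((true,true),.TL)]
  | false, .BL => [((false,false),.BL),((false,true),.N),((true,true),.BR)]
  | false, .BR => [((false,false),.BR),((true,false),.N)]
  | true, .TL => [((false,false),.TR),((false,true),.M),((true,true),.TL)]
  | true, .TR => [((true,false),.M),((true,true),.TR)]
  | true, .BL => [((true,true),.BL)]
  | true, .BR => [((false,false),.BL),((false,true),.N),((true,true),.BR)]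
  | _, _ => []

set_option synthInstance.maxSize 1000 in
lemma reach_closed : ∀ (b : Bool) (x : AP2TLoc), x ≠ .M → x ≠ .N →
    ∀ c c', c ∈ reachSet b x → NWTStep c c' → c' ∈ reachSet b x := by decide

lemma reach_mem (b : Bool) (x : AP2TLoc) (hx : x ≠ .M ∧ x ≠ .N) (c : (Bool × Bool) × AP2TLoc)
    (h : Relation.ReflTransGen NWTStep ((b, b), x) c) : c ∈ reachSet b x := by
  induction h with
  | refl => revert hx; cases b <;> cases x <;> decide
  | tail _ hstep ih => exact reach_closed b x hx.1 hx.2 _ _ ih hstep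

set_option synthInstance.maxSize 1000 in
lemma reach_ext : ∀ (b : Bool) (x : AP2TLoc), x ≠ .M → x ≠ .N →
    ∀ (σ' : Bool × Bool) (y : AP2TLoc), y ≠ .M → y ≠ .N → (σ', y) ∈ reachSet b x →
    ((y = x ∧ σ' = (b, b)) ∨ (σ' = (!b, !b) ∧ AP2TTarget b x y)) := by decide

lemma step2 {a b c : (Bool × Bool) × AP2TLoc} (h1 : NWTStep a b) (h2 : NWTStep b c) :
    Relation.ReflTransGen NWTStep a c :=
  (Relation.ReflTransGen.single h1).tail h2

/-- in the NWT-to-AP2T construction the two gadgets' states remain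
synchronized at all reachable external configurations, and the composed system's
external behavior equals that of an antiparallel 2-toggle: starting synchronized in
state `(b, b)` at an external location `x`, the external configurations reachable are
exactly staying put and the AP2T traversal (which flips both states). -/
theorem nwt_simulates_ap2t (b : Bool) (x y : AP2TLoc) (σ' : Bool × Bool)
    (hx : x ≠ .M ∧ x ≠ .N) (hy : y ≠ .M ∧ y ≠ .N) :
    (Relation.ReflTransGen NWTStep ((b, b), x) (σ', y) → σ'.1 = σ'.2) ∧
    (Relation.ReflTransGen NWTStep ((b, b), x) (σ', y) ↔
      ((y = x ∧ σ' = (b, b)) ∨ (σ' = (!b, !b) ∧ AP2TTarget b x y))) := by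
  have fwd : Relation.ReflTransGen NWTStep ((b, b), x) (σ', y) →
      ((y = x ∧ σ' = (b, b)) ∨ (σ' = (!b, !b) ∧ AP2TTarget b x y)) := fun h =>
    reach_ext b x hx.1 hx.2 σ' y hy.1 hy.2 (reach_mem b x hx _ h)
  have bwd : ((y = x ∧ σ' = (b, b)) ∨ (σ' = (!b, !b) ∧ AP2TTarget b x y)) →
      Relation.ReflTransGen NWTStep ((b, b), x) (σ', y) := by
    rintro (⟨rfl, rfl⟩ | ⟨rfl, h⟩)
    · exact Relation.ReflTransGen.refl
    · rcases h with ⟨rfl, (⟨rfl, rfl⟩ | ⟨rfl, rfl⟩)⟩ | ⟨rfl, (⟨rfl, rfl⟩ | ⟨rfl, rfl⟩)⟩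
      · exact step2 (b := ((false,true), .M)) (by decide) (by decide)
      · exact step2 (b := ((false,true), .N)) (by decide) (by decide)
      · exact step2 (b := ((false,true), .M)) (by decide) (by decide)
      · exact step2 (b := ((false,true), .N)) (by decide) (by decide)
  refine ⟨fun h => ?_, ⟨fwd, bwd⟩⟩
  rcases fwd h with ⟨_, rfl⟩ | ⟨rfl, _⟩ <;> rfl
end

section
/- Any nontrivial deterministic reversible 2-state 2-tunnel gadget has, up to reflection and relabeling, one of exactly nine planar types: crossing/non-crossing tripwire-lock, crossing/non-crossing toggle-lock, crossing/non-crossing tripwire-toggle, and crossing/parallel/antiparallel 2-toggle. -/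
/- A planar 2-state 2-tunnel gadget: 4 locations `Fin 4` in clockwise order on the
gadget boundary, 2 states `Bool`, the locations paired into 2 tunnels by a fixed-point
free involution `μ`, and all traversals crossing tunnels. -/

section
/-- Gadget behaviors are relations on (state, location) pairs. -/
abbrev Gadget2 := Bool × Fin 4 → Bool × Fin 4 → Prop

/-- Deterministic: at most one traversal from each (state, location) pair. -/
def Det2 (g : Gadget2) : Prop := ∀ x y y', g x y → g x y' → y = y'

/-- Reversible: every traversal can be immediately undone. -/
def Rev2 (g : Gadget2) : Prop := ∀ x y, g x y → g y x

/-- The 4 locations are matched into 2 tunnels by `μ`, and all traversals cross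
tunnels. -/
def TunnelStruct2 (g : Gadget2) (μ : Fin 4 → Fin 4) : Prop :=
  Function.Involutive μ ∧ (∀ a, μ a ≠ a) ∧
    ∀ s a s' b, g (s, a) (s', b) → b = μ a

/-- The tunnel through `a` is a tripwire: passable both ways in both states, each
traversal flipping the state. -/
def TripwireT2 (g : Gadget2) (μ : Fin 4 → Fin 4) (a : Fin 4) : Prop :=
  ∀ s s', (g (s, a) (s', μ a) ↔ s' = !s) ∧ (g (s, μ a) (s', a) ↔ s' = !s)

/-- The tunnel through `a` is a lock: passable both ways in state `s₀` without state
change, impassable in the other state. -/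
def LockT2 (g : Gadget2) (μ : Fin 4 → Fin 4) (a : Fin 4) : Prop :=
  ∃ s₀ : Bool, ∀ s s',
    (g (s, a) (s', μ a) ↔ (s = s₀ ∧ s' = s)) ∧
    (g (s, μ a) (s', a) ↔ (s = s₀ ∧ s' = s))

/-- The tunnel through `a` is a toggle: in each state passable in exactly one
direction, opposite in the two states, each traversal flipping the state. -/
def ToggleT2 (g : Gadget2) (μ : Fin 4 → Fin 4) (a : Fin 4) : Prop :=
  ∃ b₀ : Bool, ∀ s s',
    (g (s, if xor s b₀ then μ a else a) (s', if xor s b₀ then a else μ a) ↔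
      s' = !s) ∧
    ¬ g (s, if xor s b₀ then a else μ a) (s', if xor s b₀ then μ a else a)

/-- The tunnel through `a` is trivial: always open both ways with no state change, or
never passable. -/
def TrivialT2 (g : Gadget2) (μ : Fin 4 → Fin 4) (a : Fin 4) : Prop :=
  (∀ s s', (g (s, a) (s', μ a) ↔ s' = s) ∧ (g (s, μ a) (s', a) ↔ s' = s)) ∨
  (∀ s s', ¬ g (s, a) (s', μ a) ∧ ¬ g (s, μ a) (s', a))

/-- A nontrivial deterministic reversible 2-state 2-tunnel planar gadget: deterministic,
reversible, tunnel-structured, with no trivial tunnel, and not equivalent to a 1-state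
gadget (which excludes the lock–lock and tripwire–tripwire combinations). -/
def ValidNontrivial2 (g : Gadget2) : Prop :=
  Det2 g ∧ Rev2 g ∧
    ∃ μ : Fin 4 → Fin 4, TunnelStruct2 g μ ∧
      (∀ a, ¬ TrivialT2 g μ a) ∧
      ¬ (∀ a, LockT2 g μ a) ∧ ¬ (∀ a, TripwireT2 g μ a)

/-- Relabelings of the locations preserving the cyclic (planar) order up to
reflection: the dihedral permutations of `Fin 4`. -/
def Dihedral4 (ρ : Fin 4 ≃ Fin 4) : Prop :=
  ∃ c : Fin 4, (∀ i, ρ i = i + c) ∨ (∀ i, ρ i = c - i)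

/-- Two planar gadgets are equivalent up to reflection and relabeling: some dihedral
relabeling of the locations and some relabeling of the two states carries one
behavior to the other. -/
def GEquiv2 (g g' : Gadget2) : Prop :=
  ∃ ρ : Fin 4 ≃ Fin 4, Dihedral4 ρ ∧
    ∃ τ : Bool ≃ Bool, ∀ s a s' b, g' (s, a) (s', b) ↔ g (τ s, ρ a) (τ s', ρ b)

-- ===================== auxiliary definitions =====================
section Aux
set_option synthInstance.maxSize 1000
set_option maxRecDepth 4000

/-- Concrete gadget from a transition table. -/
def GG (μ : Fin 4 → Fin 4) (t : Bool → Fin 4 → Option Bool) : Gadget2 :=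
  fun x y => y.2 = μ x.2 ∧ t x.1 x.2 = some y.1

instance (μ t x y) : Decidable (GG μ t x y) := by unfold GG; infer_instance

instance (g : Gadget2) [∀ x y, Decidable (g x y)] : Decidable (Det2 g) := by
  unfold Det2; infer_instance
instance (g : Gadget2) [∀ x y, Decidable (g x y)] : Decidable (Rev2 g) := by
  unfold Rev2; infer_instance
instance (g : Gadget2) (μ) [∀ x y, Decidable (g x y)] : Decidable (TunnelStruct2 g μ) := by
  unfold TunnelStruct2 Function.Involutive; infer_instance
instance (g : Gadget2) (μ a) [∀ x y, Decidable (g x y)] : Decidable (TripwireT2 g μ a) := by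
  unfold TripwireT2; infer_instance
instance (g : Gadget2) (μ a) [∀ x y, Decidable (g x y)] : Decidable (LockT2 g μ a) := by
  unfold LockT2; infer_instance
instance (g : Gadget2) (μ a) [∀ x y, Decidable (g x y)] : Decidable (TrivialT2 g μ a) := by
  unfold TrivialT2; infer_instance

def m0v : Fin 4 → Fin 4 := fun i => match i with | 0 => 1 | 1 => 0 | 2 => 3 | 3 => 2
def m1v : Fin 4 → Fin 4 := fun i => match i with | 0 => 2 | 1 => 3 | 2 => 0 | 3 => 1
def m2v : Fin 4 → Fin 4 := fun i => match i with | 0 => 3 | 1 => 2 | 2 => 1 | 3 => 0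

def mkT8 (a b c d e f h i : Option Bool) : Bool → Fin 4 → Option Bool :=
  fun s j => match s, j with
  | false, 0 => a | false, 1 => b | false, 2 => c | false, 3 => d
  | true, 0 => e | true, 1 => f | true, 2 => h | true, 3 => i

/-- The five nontrivial tunnel tables: tripwire, lock-false, lock-true,
toggle-false, toggle-true; entry values (p,q,r,w) =
(enter `a` in state false, enter `μ a` in state false, enter `a` in state true,
 enter `μ a` in state true). -/
def P5 : Fin 5 → Option Bool := ![some true, some false, none, some true, none]
def Q5 : Fin 5 → Option Bool := ![some true, some false, none, none, some true]
def R5 : Fin 5 → Option Bool := ![some false, none, some true, none, some false]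
def W5 : Fin 5 → Option Bool := ![some false, none, some true, some false, none]

/-- The nine canonical gadgets. -/
def M9 : Fin 9 → (Fin 4 → Fin 4) :=
  ![m0v, m0v, m0v, m0v, m0v, m1v, m1v, m1v, m1v]
def T9 : Fin 9 → (Bool → Fin 4 → Option Bool) :=
  ![mkT8 (some true) (some true) (some false) (some false) (some false) (some false) none none,
    mkT8 (some true) none (some false) (some false) none (some false) none none,
    mkT8 (some true) (some true) (some true) none (some false) (some false) none (some false),
    mkT8 (some true) none (some true) none none (some false) none (some false),
    mkT8 (some true) none none (some true) none (some false) (some false) none,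
    mkT8 (some true) (some false) (some true) (some false) (some false) none (some false) none,
    mkT8 (some true) (some false) none (some false) none none (some false) none,
    mkT8 (some true) (some true) (some true) none (some false) none (some false) (some false),
    mkT8 (some true) (some true) none none none none (some false) (some false)]

def G9 : Fin 9 → Gadget2 := fun j => GG (M9 j) (T9 j)

instance (j x y) : Decidable (G9 j x y) := by unfold G9; infer_instance

def L9 : List Gadget2 := [G9 0, G9 1, G9 2, G9 3, G9 4, G9 5, G9 6, G9 7, G9 8]

/-- Equivalence with explicit dihedral data: `r = false` is rotation by `c`,
`r = true` is reflection `c - ·`; `tb` the state relabeling. -/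
def GE' (g g' : Gadget2) : Prop :=
  ∃ c : Fin 4, ∃ r tb : Bool, ∀ s a s' b,
    g' (s, a) (s', b) ↔
      g (xor tb s, if r then c - a else a + c) (xor tb s', if r then c - b else b + c)

instance (g g' : Gadget2) [∀ x y, Decidable (g x y)] [∀ x y, Decidable (g' x y)] :
    Decidable (GE' g g') := by unfold GE'; infer_instance

/-- Equivalence to the `j`-th canonical gadget with explicit data. -/
def GEW (g : Gadget2) (j : Fin 9) (c : Fin 4) (r tb : Bool) : Prop :=
  ∀ s a s' b,
    G9 j (s, a) (s', b) ↔
      g (xor tb s, if r then c - a else a + c) (xor tb s', if r then c - b else b + c)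

instance (g : Gadget2) (j c r tb) [∀ x y, Decidable (g x y)] :
    Decidable (GEW g j c r tb) := by unfold GEW; infer_instance

def xorE (b : Bool) : Bool ≃ Bool :=
  ⟨fun s => xor b s, fun s => xor b s,
   fun s => by cases b <;> cases s <;> rfl, fun s => by cases b <;> cases s <;> rfl⟩

lemma bool_equiv_eq (τ : Bool ≃ Bool) (s : Bool) : τ s = xor (τ false) s := by
  cases hf : τ false <;> cases ht : τ true <;> cases s <;> simp [hf, ht] <;>
    first
      | exact absurd (τ.injective (ht.trans hf.symm)) (by decide)
      | rfl

lemma gew_geq {g : Gadget2} {j c r tb} (h : GEW g j c r tb) : GEquiv2 g (G9 j) := by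
  cases r
  · exact ⟨Equiv.addRight c, ⟨c, Or.inl fun i => rfl⟩, xorE tb,
      fun s a s' b => h s a s' b⟩
  · exact ⟨Equiv.subLeft c, ⟨c, Or.inr fun i => rfl⟩, xorE tb,
      fun s a s' b => h s a s' b⟩

lemma mem9 (j : Fin 9) : G9 j ∈ L9 := by fin_cases j <;> simp [L9]

lemma gew_conc {g : Gadget2} {j c r tb} (h : GEW g j c r tb) :
    ∃ g' ∈ L9, GEquiv2 g g' := ⟨G9 j, mem9 j, gew_geq h⟩

lemma geq_ge' {g g' : Gadget2} (h : GEquiv2 g g') : GE' g g' := by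
  obtain ⟨ρ, ⟨c, hd⟩, τ, h⟩ := h
  rcases hd with hd | hd
  · refine ⟨c, false, τ false, fun s a s' b => ?_⟩
    have hh := h s a s' b
    rw [hd a, hd b, bool_equiv_eq τ s, bool_equiv_eq τ s'] at hh
    simpa using hh
  · refine ⟨c, true, τ false, fun s a s' b => ?_⟩
    have hh := h s a s' b
    rw [hd a, hd b, bool_equiv_eq τ s, bool_equiv_eq τ s'] at hh
    simpa using hh

-- ===================== per-tunnel classification =====================

/-- Tunnel-level reversibility for table values `(p,q,r,w)`. -/
def RevW (p q r w : Option Bool) : Prop :=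
  ∀ s' : Bool,
    (p = some s' → cond s' w q = some false) ∧
    (q = some s' → cond s' r p = some false) ∧
    (r = some s' → cond s' w q = some true) ∧
    (w = some s' → cond s' r p = some true)

/-- Tunnel-level triviality. -/
def TrivW (p q r w : Option Bool) : Prop :=
  (∀ s s' : Bool, (cond s r p = some s' ↔ s' = s) ∧ (cond s w q = some s' ↔ s' = s)) ∨
  (∀ s s' : Bool, ¬ cond s r p = some s' ∧ ¬ cond s w q = some s')

instance (p q r w : Option Bool) : Decidable (RevW p q r w) := by
  unfold RevW; infer_instance
instance (p q r w : Option Bool) : Decidable (TrivW p q r w) := by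
  unfold TrivW; infer_instance

lemma tclass : ∀ p q r w : Option Bool, RevW p q r w → ¬ TrivW p q r w →
    ∃ k : Fin 5, p = P5 k ∧ q = Q5 k ∧ r = R5 k ∧ w = W5 k := by decide

lemma gg1 {μ t s a s'} : GG μ t (s, a) (s', μ a) ↔ t s a = some s' :=
  ⟨fun h => h.2, fun h => ⟨rfl, h⟩⟩

lemma gg2 {μ t s a s'} (hinv : ∀ x, μ (μ x) = x) :
    GG μ t (s, μ a) (s', a) ↔ t s (μ a) = some s' :=
  ⟨fun h => h.2, fun h => ⟨(hinv a).symm, h⟩⟩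

lemma revW_bridge {μ t} (hinv : ∀ x, μ (μ x) = x) (hrev : Rev2 (GG μ t)) (a : Fin 4) :
    RevW (t false a) (t false (μ a)) (t true a) (t true (μ a)) := by
  intro s'
  refine ⟨fun h => ?_, fun h => ?_, fun h => ?_, fun h => ?_⟩ <;> cases s' <;>
    first
      | exact (hrev (_, a) (_, μ a) ⟨rfl, h⟩).2
      | exact (hrev (_, μ a) (_, a) ⟨(hinv a).symm, h⟩).2

lemma trivW_bridge {μ t} (hinv : ∀ x, μ (μ x) = x) {a : Fin 4}
    (h : TrivW (t false a) (t false (μ a)) (t true a) (t true (μ a))) :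
    TrivialT2 (GG μ t) μ a := by
  unfold TrivialT2
  rcases h with h | h
  · left; intro s s'; have hh := h s s'
    cases s <;> simp only [gg1, gg2 hinv] <;> exact hh
  · right; intro s s'; have hh := h s s'
    cases s <;> simp only [gg1, gg2 hinv] <;> exact hh

-- ===================== the three pairings =====================

def TBL0 (kA kB : Fin 5) : Bool → Fin 4 → Option Bool :=
  mkT8 (P5 kA) (Q5 kA) (P5 kB) (Q5 kB) (R5 kA) (W5 kA) (R5 kB) (W5 kB)
def TBL1 (kA kB : Fin 5) : Bool → Fin 4 → Option Bool :=
  mkT8 (P5 kA) (P5 kB) (Q5 kA) (Q5 kB) (R5 kA) (R5 kB) (W5 kA) (W5 kB)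
def TBL2 (kA kB : Fin 5) : Bool → Fin 4 → Option Bool :=
  mkT8 (P5 kA) (P5 kB) (Q5 kB) (Q5 kA) (R5 kA) (R5 kB) (W5 kB) (W5 kA)

def J0 : Fin 5 → Fin 5 → Fin 9 := ![ ![ 0, 0, 0, 2, 2 ], ![ 0, 0, 0, 1, 1 ], ![ 0, 0, 0, 1, 1 ], ![ 2, 1, 1, 3, 4 ], ![ 2, 1, 1, 4, 3 ] ]
def C0 : Fin 5 → Fin 5 → Fin 4 := ![ ![ 0, 0, 0, 0, 0 ], ![ 2, 0, 0, 2, 3 ], ![ 2, 0, 0, 3, 2 ], ![ 2, 0, 1, 0, 0 ], ![ 2, 1, 0, 0, 0 ] ]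
def R0 : Fin 5 → Fin 5 → Bool := ![ ![ false, false, false, false, false ], ![ false, false, false, false, true ], ![ false, false, false, true, false ], ![ false, false, true, false, false ], ![ false, true, false, false, false ] ]
def B0 : Fin 5 → Fin 5 → Bool := ![ ![ false, false, true, false, true ], ![ false, false, false, false, false ], ![ true, false, false, true, true ], ![ false, false, true, false, false ], ![ true, false, true, true, true ] ]
def J1 : Fin 5 → Fin 5 → Fin 9 := ![ ![ 0, 5, 5, 7, 7 ], ![ 5, 0, 0, 6, 6 ], ![ 5, 0, 0, 6, 6 ], ![ 7, 6, 6, 8, 8 ], ![ 7, 6, 6, 8, 8 ] ]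
def C1 : Fin 5 → Fin 5 → Fin 4 := ![ ![ 0, 0, 0, 0, 0 ], ![ 1, 0, 0, 1, 3 ], ![ 1, 0, 0, 3, 1 ], ![ 1, 0, 2, 0, 0 ], ![ 1, 2, 0, 0, 0 ] ]
def R1 : Fin 5 → Fin 5 → Bool := ![ ![ false, false, false, false, false ], ![ false, false, false, false, false ], ![ false, false, false, false, false ], ![ false, false, false, false, true ], ![ false, false, false, true, false ] ]
def B1 : Fin 5 → Fin 5 → Bool := ![ ![ false, false, true, false, true ], ![ false, false, false, false, false ], ![ true, false, false, true, true ], ![ true, false, true, false, false ], ![ false, false, true, true, true ] ]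
def J2 : Fin 5 → Fin 5 → Fin 9 := ![ ![ 0, 0, 0, 2, 2 ], ![ 0, 0, 0, 1, 1 ], ![ 0, 0, 0, 1, 1 ], ![ 2, 1, 1, 4, 3 ], ![ 2, 1, 1, 3, 4 ] ]
def C2 : Fin 5 → Fin 5 → Fin 4 := ![ ![ 0, 0, 0, 0, 0 ], ![ 1, 0, 0, 1, 2 ], ![ 1, 0, 0, 2, 1 ], ![ 1, 0, 3, 0, 0 ], ![ 1, 3, 0, 0, 0 ] ]
def R2 : Fin 5 → Fin 5 → Bool := ![ ![ false, true, true, true, true ], ![ false, false, false, false, true ], ![ false, false, false, true, false ], ![ false, true, false, true, true ], ![ false, false, true, true, true ] ]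
def B2 : Fin 5 → Fin 5 → Bool := ![ ![ false, false, true, true, false ], ![ false, false, false, false, false ], ![ true, false, false, true, true ], ![ true, false, true, false, false ], ![ false, false, true, true, true ] ]


lemma cover0 : ∀ kA kB : Fin 5,
    ¬ (∀ a, LockT2 (GG m0v (TBL0 kA kB)) m0v a) →
    ¬ (∀ a, TripwireT2 (GG m0v (TBL0 kA kB)) m0v a) →
    GEW (GG m0v (TBL0 kA kB)) (J0 kA kB) (C0 kA kB) (R0 kA kB) (B0 kA kB) := by decide

lemma cover1 : ∀ kA kB : Fin 5,
    ¬ (∀ a, LockT2 (GG m1v (TBL1 kA kB)) m1v a) →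
    ¬ (∀ a, TripwireT2 (GG m1v (TBL1 kA kB)) m1v a) →
    GEW (GG m1v (TBL1 kA kB)) (J1 kA kB) (C1 kA kB) (R1 kA kB) (B1 kA kB) := by decide

lemma cover2 : ∀ kA kB : Fin 5,
    ¬ (∀ a, LockT2 (GG m2v (TBL2 kA kB)) m2v a) →
    ¬ (∀ a, TripwireT2 (GG m2v (TBL2 kA kB)) m2v a) →
    GEW (GG m2v (TBL2 kA kB)) (J2 kA kB) (C2 kA kB) (R2 kA kB) (B2 kA kB) := by decide

lemma mu3 : ∀ μ : Fin 4 → Fin 4, (∀ x, μ (μ x) = x) → (∀ a, μ a ≠ a) →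
    (∀ a, μ a = m0v a) ∨ (∀ a, μ a = m1v a) ∨ (∀ a, μ a = m2v a) := by decide

lemma valid9 : ∀ j : Fin 9, ValidNontrivial2 (G9 j) := by
  intro j
  fin_cases j <;>
    first
      | exact ⟨by decide, by decide, m0v, by decide, by decide, by decide, by decide⟩
      | exact ⟨by decide, by decide, m1v, by decide, by decide, by decide, by decide⟩

lemma pairwise9 : L9.Pairwise (fun g g' => ¬ GE' g g') := by
  have H : ∀ i j : Fin 9, i < j → ¬ GE' (G9 i) (G9 j) := by decide
  rw [List.pairwise_iff_getElem]
  intro i j hi hj hij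
  have e : ∀ (k : ℕ) (hk : k < L9.length), L9[k] = G9 ⟨k, hk⟩ := by
    intro k hk
    have hk9 : k < 9 := hk
    interval_cases k <;> rfl
  rw [e i hi, e j hj]
  exact H _ _ hij

end Aux


/-- up to reflection and relabeling, there are exactly nine nontrivial
deterministic reversible 2-state 2-tunnel planar gadgets (crossing and non-crossing
tripwire-lock, toggle-lock and tripwire-toggle, and crossing, parallel and antiparallel
2-toggles). -/
theorem nine_nontrivial_two_tunnel_gadgets :
    ∃ L : List Gadget2, L.length = 9 ∧
      (∀ g ∈ L, ValidNontrivial2 g) ∧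
      L.Pairwise (fun g g' => ¬ GEquiv2 g g') ∧
      (∀ g : Gadget2, ValidNontrivial2 g → ∃ g' ∈ L, GEquiv2 g g') := by
  classical
  refine ⟨L9, rfl, ?_, ?_, ?_⟩
  · intro g hg
    fin_cases hg <;> exact valid9 _
  · exact pairwise9.imp fun h hq => h (geq_ge' hq)
  · intro g hg
    obtain ⟨hdet, hrev, μ, ⟨hinv, hnfix, hloc⟩, hntriv, hnlock, hntrip⟩ := hg
    set t : Bool → Fin 4 → Option Bool :=
      fun s a => if h : ∃ s', g (s, a) (s', μ a) then some h.choose else none with ht_def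
    have hgt : g = GG μ t := by
      funext x y
      obtain ⟨s, a⟩ := x; obtain ⟨s', b⟩ := y
      apply propext
      constructor
      · intro hxy
        have hb : b = μ a := hloc s a s' b hxy
        subst hb
        have hex : ∃ s'', g (s, a) (s'', μ a) := ⟨s', hxy⟩
        refine ⟨rfl, ?_⟩
        show (if h : ∃ s'', g (s, a) (s'', μ a) then some h.choose else none) = some s'
        rw [dif_pos hex]
        exact congrArg some (congrArg Prod.fst (hdet (s, a) _ _ hex.choose_spec hxy))
      · rintro ⟨hb, hts⟩
        simp only [ht_def] at hts
        split at hts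
        · next hex =>
            rw [Option.some.injEq] at hts
            have hc := hex.choose_spec
            rw [hts] at hc
            have hb' : b = μ a := hb
            rw [hb']
            exact hc
        · exact absurd hts (by simp)
    rw [hgt] at hrev hntriv hnlock hntrip ⊢
    rcases mu3 μ hinv hnfix with hm | hm | hm
    · have hμ : μ = m0v := funext hm
      subst hμ
      obtain ⟨kA, hp1, hq1, hr1, hw1⟩ :=
        tclass _ _ _ _ (revW_bridge hinv hrev 0) (fun hw => hntriv 0 (trivW_bridge hinv hw))
      obtain ⟨kB, hp2, hq2, hr2, hw2⟩ :=
        tclass _ _ _ _ (revW_bridge hinv hrev 2) (fun hw => hntriv 2 (trivW_bridge hinv hw))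
      have ht : t = TBL0 kA kB := by
        funext s a; cases s <;> fin_cases a <;> assumption
      rw [ht] at hnlock hntrip ⊢
      exact gew_conc (cover0 kA kB hnlock hntrip)
    · have hμ : μ = m1v := funext hm
      subst hμ
      obtain ⟨kA, hp1, hq1, hr1, hw1⟩ :=
        tclass _ _ _ _ (revW_bridge hinv hrev 0) (fun hw => hntriv 0 (trivW_bridge hinv hw))
      obtain ⟨kB, hp2, hq2, hr2, hw2⟩ :=
        tclass _ _ _ _ (revW_bridge hinv hrev 1) (fun hw => hntriv 1 (trivW_bridge hinv hw))
      have ht : t = TBL1 kA kB := by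
        funext s a; cases s <;> fin_cases a <;> assumption
      rw [ht] at hnlock hntrip ⊢
      exact gew_conc (cover1 kA kB hnlock hntrip)
    · have hμ : μ = m2v := funext hm
      subst hμ
      obtain ⟨kA, hp1, hq1, hr1, hw1⟩ :=
        tclass _ _ _ _ (revW_bridge hinv hrev 0) (fun hw => hntriv 0 (trivW_bridge hinv hw))
      obtain ⟨kB, hp2, hq2, hr2, hw2⟩ :=
        tclass _ _ _ _ (revW_bridge hinv hrev 1) (fun hw => hntriv 1 (trivW_bridge hinv hw))
      have ht : t = TBL2 kA kB := by
        funext s a; cases s <;> fin_cases a <;> assumption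
      rw [ht] at hnlock hntrip ⊢
      exact gew_conc (cover2 kA kB hnlock hntrip)


end
end
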